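/- arXiv:1406.5551 — 4 statements merged into one kernel-verified Lean document; each statement's English description precedes it below -/
import Mathlib

section
/- Let X be a pointed metric space, Y a real Banach space, and 1 ≤ p < ∞. Then μ_p is a norm on the vector space ℱ(X;Y) of Y-valued molecules on X: μ_p(m) ≥ 0, μ_p(m) = 0 implies m = 0, μ_p(αm) = |α|·μ_p(m) for all α ∈ ℝ, and μ_p(m₁ + m₂) ≤ μ_p(m₁) + μ_p(m₂) for all molecules m, m₁, m₂. -/
/-!
STATEMENT 0: For a pointed metric space `X`, a real Banach space `Y` and `1 ≤ p < ∞`,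
the quantity `μ_p` is a norm on the space `ℱ(X;Y)` of `Y`-valued molecules on `X`.
-/

open scoped BigOperators NNReal
open Pointwise
set_option linter.unusedSectionVars false

noncomputable section

variable {X : Type*} [MetricSpace X] {Y : Type*} [NormedAddCommGroup Y] [NormedSpace ℝ Y]

/-- The atom `y·m_{x x'}`: the finitely supported function equal to `y` at `x`,
`-y` at `x'` and `0` elsewhere. -/
def molAtom (x x' : X) (y : Y) : X →₀ Y :=
  Finsupp.single x y - Finsupp.single x' y

/-- The space `ℱ(X;Y)` of `Y`-valued molecules on `X`: finitely supported functions
`m : X → Y` whose values sum to `0`. -/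
def MolSpace (X : Type*) (Y : Type*) [NormedAddCommGroup Y] [NormedSpace ℝ Y] :
    Submodule ℝ (X →₀ Y) :=
  LinearMap.ker (Finsupp.lsum ℝ fun _ : X => (LinearMap.id : Y →ₗ[ℝ] Y))

/-- `sup_{y* ∈ B_{Y*}} (Σ_i |y*(y_i)|^q)^{1/q}`, the weak `l_q` norm of a finite family in `Y`. -/
def dualBallSup (q : ℝ) {n : ℕ} (y : Fin n → Y) : ℝ :=
  ⨆ g : {g : Y →L[ℝ] ℝ // ‖g‖ ≤ 1}, (∑ i, |g.1 (y i)| ^ q) ^ (1 / q)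

/-- The weak factor in the definition of `μ_p`: for `p = 1` it is
`sup_{y* ∈ B_{Y*}} max_i |y*(y_i)|`, and for `p > 1` it is the weak `l_{p*}` norm
with `p* = p/(p-1)` the conjugate exponent. -/
def weakFactor (p : ℝ) {n : ℕ} (y : Fin n → Y) : ℝ :=
  if p = 1 then ⨆ g : {g : Y →L[ℝ] ℝ // ‖g‖ ≤ 1}, ⨆ i, |g.1 (y i)|
  else dualBallSup (p / (p - 1)) y

/-- The norm `μ_p` on molecules: the infimum over all representations
`m = Σ_i λ_i y_i m_{x_i x_i'}` of
`(Σ_i |λ_i|^p d(x_i,x_i')^p)^{1/p} · sup_{y* ∈ B_{Y*}} (Σ_i |y*(y_i)|^{p*})^{1/p*}`. -/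
def muNorm (p : ℝ) (m : X →₀ Y) : ℝ :=
  sInf {c : ℝ | ∃ (n : ℕ) (lam : Fin n → ℝ) (y : Fin n → Y) (x x' : Fin n → X),
    m = ∑ i, lam i • molAtom (x i) (x' i) (y i) ∧
    c = (∑ i, |lam i| ^ p * dist (x i) (x' i) ^ p) ^ (1 / p) * weakFactor p y}

-- basic instances and lemmas
instance : Nonempty {g : Y →L[ℝ] ℝ // ‖g‖ ≤ 1} := ⟨⟨0, by simp⟩⟩

lemma molAtom_smul (x x' : X) (c : ℝ) (y : Y) : molAtom x x' (c • y) = c • molAtom x x' y := by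
  simp [molAtom, Finsupp.smul_single, smul_sub]

lemma molAtom_self (x : X) (y : Y) : molAtom x x y = 0 := by simp [molAtom]

lemma abs_apply_le (g : {g : Y →L[ℝ] ℝ // ‖g‖ ≤ 1}) (y : Y) : |g.1 y| ≤ ‖y‖ := by
  have h := g.1.le_opNorm y
  rw [Real.norm_eq_abs] at h
  calc |g.1 y| ≤ ‖g.1‖ * ‖y‖ := h
    _ ≤ 1 * ‖y‖ := mul_le_mul_of_nonneg_right g.2 (norm_nonneg _)
    _ = ‖y‖ := one_mul _

lemma weakFactor_nonneg (p : ℝ) {n : ℕ} (y : Fin n → Y) : 0 ≤ weakFactor p y := by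
  unfold weakFactor dualBallSup
  split
  · exact Real.iSup_nonneg fun g => Real.iSup_nonneg fun i => abs_nonneg _
  · exact Real.iSup_nonneg fun g =>
      Real.rpow_nonneg (Finset.sum_nonneg fun i _ => Real.rpow_nonneg (abs_nonneg _) _) _

lemma bdd_one {n : ℕ} (y : Fin n → Y) :
    BddAbove (Set.range fun g : {g : Y →L[ℝ] ℝ // ‖g‖ ≤ 1} => ⨆ i, |g.1 (y i)|) := by
  refine ⟨∑ i, ‖y i‖, ?_⟩
  rintro _ ⟨g, rfl⟩
  refine Real.iSup_le (fun i => ?_) (Finset.sum_nonneg fun i _ => norm_nonneg _)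
  exact le_trans (abs_apply_le g (y i))
    (Finset.single_le_sum (fun i _ => norm_nonneg (y i)) (Finset.mem_univ i))

lemma bdd_q (q : ℝ) (hq : 0 ≤ q) {n : ℕ} (y : Fin n → Y) :
    BddAbove (Set.range fun g : {g : Y →L[ℝ] ℝ // ‖g‖ ≤ 1} =>
      (∑ i, |g.1 (y i)| ^ q) ^ (1 / q)) := by
  refine ⟨(∑ i, ‖y i‖ ^ q) ^ (1 / q), ?_⟩
  rintro _ ⟨g, rfl⟩
  refine Real.rpow_le_rpow (Finset.sum_nonneg fun i _ => Real.rpow_nonneg (abs_nonneg _) _)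
    (Finset.sum_le_sum fun i _ => Real.rpow_le_rpow (abs_nonneg _) (abs_apply_le g (y i)) hq)
    (by positivity)

lemma le_weakFactor_one {n : ℕ} (y : Fin n → Y) (g : {g : Y →L[ℝ] ℝ // ‖g‖ ≤ 1}) :
    (⨆ i, |g.1 (y i)|) ≤ weakFactor 1 y := by
  rw [weakFactor, if_pos rfl]
  exact le_ciSup (bdd_one y) g

lemma le_weakFactor_q {p : ℝ} (hp : 1 < p) {n : ℕ} (y : Fin n → Y)
    (g : {g : Y →L[ℝ] ℝ // ‖g‖ ≤ 1}) :
    (∑ i, |g.1 (y i)| ^ (p / (p - 1))) ^ (1 / (p / (p - 1))) ≤ weakFactor p y := by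
  rw [weakFactor, if_neg hp.ne']
  exact le_ciSup (bdd_q _ (div_nonneg (by linarith) (by linarith)) y) g

def pairFun (f : X → ℝ) (g : Y →L[ℝ] ℝ) : (X →₀ Y) →ₗ[ℝ] ℝ :=
  Finsupp.lsum ℝ fun a => f a • (g : Y →ₗ[ℝ] ℝ)

lemma pairFun_single (f : X → ℝ) (g : Y →L[ℝ] ℝ) (a : X) (y : Y) :
    pairFun f g (Finsupp.single a y) = f a * g y := by
  simp [pairFun]

lemma pairFun_atom (f : X → ℝ) (g : Y →L[ℝ] ℝ) (x x' : X) (y : Y) :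
    pairFun f g (molAtom x x' y) = (f x - f x') * g y := by
  simp only [molAtom, map_sub, pairFun_single]; ring

lemma sum_pair_le {p : ℝ} (hp : 1 ≤ p) (f : X → ℝ) (hf : ∀ a b, |f a - f b| ≤ dist a b)
    (g : Y →L[ℝ] ℝ) (hg : ‖g‖ ≤ 1) {n : ℕ} (lam : Fin n → ℝ) (y : Fin n → Y)
    (x x' : Fin n → X) :
    |∑ i, lam i * ((f (x i) - f (x' i)) * g (y i))| ≤
      (∑ i, |lam i| ^ p * dist (x i) (x' i) ^ p) ^ (1 / p) * weakFactor p y := by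
  set G : {g : Y →L[ℝ] ℝ // ‖g‖ ≤ 1} := ⟨g, hg⟩ with hG
  have step1 : |∑ i, lam i * ((f (x i) - f (x' i)) * g (y i))| ≤
      ∑ i, (|lam i| * dist (x i) (x' i)) * |g (y i)| := by
    refine le_trans (Finset.abs_sum_le_sum_abs _ _) (Finset.sum_le_sum fun i _ => ?_)
    rw [abs_mul, abs_mul, mul_assoc]
    exact mul_le_mul_of_nonneg_left
      (mul_le_mul_of_nonneg_right (hf _ _) (abs_nonneg _)) (abs_nonneg _)
  rcases eq_or_lt_of_le hp with hp1 | hp1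
  · -- p = 1
    subst hp1
    have hM : ∀ i, |g (y i)| ≤ weakFactor 1 y := fun i =>
      le_trans (le_ciSup (f := fun j => |G.1 (y j)|) (Set.Finite.bddAbove (Set.finite_range _)) i) (le_weakFactor_one y G)
    calc |∑ i, lam i * ((f (x i) - f (x' i)) * g (y i))|
        ≤ ∑ i, (|lam i| * dist (x i) (x' i)) * |g (y i)| := step1
      _ ≤ ∑ i, (|lam i| * dist (x i) (x' i)) * weakFactor 1 y :=
          Finset.sum_le_sum fun i _ => mul_le_mul_of_nonneg_left (hM i)
            (mul_nonneg (abs_nonneg _) dist_nonneg)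
      _ = (∑ i, |lam i| * dist (x i) (x' i)) * weakFactor 1 y := by
          rw [Finset.sum_mul]
      _ = (∑ i, |lam i| ^ (1:ℝ) * dist (x i) (x' i) ^ (1:ℝ)) ^ (1 / (1:ℝ)) * weakFactor 1 y := by
          simp [Real.rpow_one]
  · -- p > 1
    set q : ℝ := p / (p - 1) with hq
    have hpq : p.HolderConjugate q := Real.HolderConjugate.conjExponent hp1
    have holder := Real.inner_le_Lp_mul_Lq (s := Finset.univ)
      (f := fun i => |lam i| * dist (x i) (x' i)) (g := fun i => |g (y i)|) hpq
    have e1 : (∑ i, abs (|lam i| * dist (x i) (x' i)) ^ p)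
        = ∑ i, |lam i| ^ p * dist (x i) (x' i) ^ p :=
      Finset.sum_congr rfl fun i _ => by
        rw [abs_of_nonneg (mul_nonneg (abs_nonneg _) dist_nonneg),
          Real.mul_rpow (abs_nonneg _) dist_nonneg]
    have e2 : (∑ i, abs |g (y i)| ^ q) = ∑ i, |g (y i)| ^ q :=
      Finset.sum_congr rfl fun i _ => by rw [abs_abs]
    rw [e1, e2] at holder
    refine le_trans step1 (le_trans holder ?_)
    exact mul_le_mul_of_nonneg_left (le_weakFactor_q hp1 y G)
      (Real.rpow_nonneg (Finset.sum_nonneg fun i _ =>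
        mul_nonneg (Real.rpow_nonneg (abs_nonneg _) _) (Real.rpow_nonneg dist_nonneg _)) _)

def repSet (p : ℝ) (m : X →₀ Y) : Set ℝ :=
  {c : ℝ | ∃ (n : ℕ) (lam : Fin n → ℝ) (y : Fin n → Y) (x x' : Fin n → X),
    m = ∑ i, lam i • molAtom (x i) (x' i) (y i) ∧
    c = (∑ i, |lam i| ^ p * dist (x i) (x' i) ^ p) ^ (1 / p) * weakFactor p y}

lemma muNorm_def (p : ℝ) (m : X →₀ Y) : muNorm p m = sInf (repSet p m) := rfl

lemma repSet_nonneg (p : ℝ) (m : X →₀ Y) : ∀ c ∈ repSet p m, 0 ≤ c := by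
  rintro c ⟨n, lam, y, x, x', -, rfl⟩
  exact mul_nonneg (Real.rpow_nonneg (Finset.sum_nonneg fun i _ =>
    mul_nonneg (Real.rpow_nonneg (abs_nonneg _) _) (Real.rpow_nonneg dist_nonneg _)) _)
    (weakFactor_nonneg _ _)

lemma repSet_bddBelow (p : ℝ) (m : X →₀ Y) : BddBelow (repSet p m) :=
  ⟨0, repSet_nonneg p m⟩

lemma muNorm_nonneg (p : ℝ) (m : X →₀ Y) : 0 ≤ muNorm p m :=
  Real.sInf_nonneg fun _ hc => repSet_nonneg p m _ hc

lemma sum_support_eq_zero {m : X →₀ Y} (hm : m ∈ MolSpace X Y) :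
    ∑ a ∈ m.support, m a = 0 := by
  have h : (Finsupp.lsum ℝ fun _ : X => (LinearMap.id : Y →ₗ[ℝ] Y)) m = 0 := hm
  rw [Finsupp.lsum_apply] at h
  simpa [Finsupp.sum] using h

lemma exists_rep (x0 : X) {m : X →₀ Y} (hm : m ∈ MolSpace X Y) :
    ∃ (n : ℕ) (lam : Fin n → ℝ) (y : Fin n → Y) (x x' : Fin n → X),
      m = ∑ i, lam i • molAtom (x i) (x' i) (y i) := by
  classical
  refine ⟨m.support.card, fun _ => 1,
    fun i => m ((m.support.equivFin.symm i : m.support) : X),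
    fun i => ((m.support.equivFin.symm i : m.support) : X), fun _ => x0, ?_⟩
  simp only [one_smul]
  rw [Equiv.sum_comp m.support.equivFin.symm
    (fun a : m.support => molAtom (a : X) x0 (m (a : X))),
    Finset.sum_coe_sort m.support (fun a => molAtom a x0 (m a))]
  unfold molAtom
  rw [Finset.sum_sub_distrib, ← Finsupp.single_finset_sum, sum_support_eq_zero hm,
    Finsupp.single_zero, sub_zero]
  conv_lhs => rw [← Finsupp.sum_single m]
  rfl

lemma pair_le_muNorm {p : ℝ} (hp : 1 ≤ p) (x0 : X) (f : X → ℝ)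
    (hf : ∀ a b, |f a - f b| ≤ dist a b) (g : Y →L[ℝ] ℝ) (hg : ‖g‖ ≤ 1)
    {m : X →₀ Y} (hm : m ∈ MolSpace X Y) :
    |pairFun f g m| ≤ muNorm p m := by
  obtain ⟨n, lam, y, x, x', hrep⟩ := exists_rep x0 hm
  rw [muNorm_def]
  refine le_csInf ⟨_, n, lam, y, x, x', hrep, rfl⟩ ?_
  rintro c ⟨n', lam', y', xx, xx', hrep', rfl⟩
  have hc : pairFun f g m = ∑ i, lam' i * ((f (xx i) - f (xx' i)) * g (y' i)) := by
    rw [hrep', map_sum]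
    exact Finset.sum_congr rfl fun i _ => by
      rw [map_smul, pairFun_atom]; simp [smul_eq_mul]
  rw [hc]
  exact sum_pair_le hp f hf g hg lam' y' xx xx'

lemma muNorm_eq_zero_imp {p : ℝ} (hp : 1 ≤ p) (x0 : X) {m : X →₀ Y}
    (hm : m ∈ MolSpace X Y) (h0 : muNorm p m = 0) : m = 0 := by
  classical
  by_contra hne
  obtain ⟨a, ha⟩ : ∃ a, m a ≠ 0 := by
    by_contra h; push_neg at h; exact hne (Finsupp.ext h)
  obtain ⟨g, hg1, hga⟩ := exists_dual_vector ℝ (m a) (norm_ne_zero_iff.2 ha)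
  set s := m.support.erase a with hs_def
  obtain ⟨r, hr0, hrle⟩ : ∃ r : ℝ, 0 < r ∧ ∀ b ∈ m.support, b ≠ a → r ≤ dist b a := by
    by_cases hs : s.Nonempty
    · refine ⟨s.inf' hs (fun b => dist b a), ?_, ?_⟩
      · rw [Finset.lt_inf'_iff]
        exact fun b hb => dist_pos.2 (Finset.ne_of_mem_erase hb)
      · exact fun b hb hba => Finset.inf'_le _ (Finset.mem_erase.2 ⟨hba, hb⟩)
    · exact ⟨1, one_pos, fun b hb hba =>
        absurd (Finset.mem_erase.2 ⟨hba, hb⟩)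
          (by simp [hs_def ▸ Finset.not_nonempty_iff_eq_empty.1 hs])⟩
  set f : X → ℝ := fun z => max (r - dist z a) 0 with hf_def
  have hf : ∀ u v, |f u - f v| ≤ dist u v := by
    intro u v
    have e : (r - dist u a) - (r - dist v a) = dist v a - dist u a := by ring
    calc |f u - f v| ≤ |(r - dist u a) - (r - dist v a)| := abs_max_sub_max_le_abs _ _ _
      _ = |dist v a - dist u a| := by rw [e]
      _ ≤ dist v u := abs_dist_sub_le _ _ _
      _ = dist u v := dist_comm _ _
  have key := pair_le_muNorm hp x0 f hf g (le_of_eq hg1) hm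
  rw [h0] at key
  have hcomp : pairFun f g m = r * ‖m a‖ := by
    have h1 : pairFun f g m = ∑ b ∈ m.support, f b * g (m b) := by
      simp [pairFun, Finsupp.lsum_apply, Finsupp.sum]
    rw [h1, Finset.sum_eq_single_of_mem a (Finsupp.mem_support_iff.2 ha)]
    · have : f a = r := by simp [hf_def, hr0.le]
      rw [this, hga]; norm_cast
    · intro b hb hba
      have hfb : f b = 0 := by
        have := hrle b hb hba
        simp only [hf_def]
        exact max_eq_right (by linarith)
      rw [hfb, zero_mul]
  rw [hcomp] at key
  have : 0 < r * ‖m a‖ := mul_pos hr0 (norm_pos_iff.2 ha)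
  rw [abs_of_pos this] at key
  linarith

lemma zero_mem_repSet {p : ℝ} (hp : 1 ≤ p) : (0:ℝ) ∈ repSet p (0 : X →₀ Y) := by
  refine ⟨0, Fin.elim0, Fin.elim0, Fin.elim0, Fin.elim0, by simp, ?_⟩
  rw [Fin.sum_univ_zero, Real.zero_rpow (one_div_ne_zero (by linarith : p ≠ 0)), zero_mul]

lemma muNorm_zero {p : ℝ} (hp : 1 ≤ p) : muNorm p (0 : X →₀ Y) = 0 :=
  le_antisymm (csInf_le (repSet_bddBelow _ _) (zero_mem_repSet hp)) (muNorm_nonneg _ _)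

lemma smul_mem_repSet {p : ℝ} (hp : 1 ≤ p) (β : ℝ) {m : X →₀ Y} {c : ℝ}
    (hc : c ∈ repSet p m) : |β| * c ∈ repSet p (β • m) := by
  obtain ⟨n, lam, y, x, x', hrep, rfl⟩ := hc
  refine ⟨n, fun i => β * lam i, y, x, x', ?_, ?_⟩
  · rw [hrep, Finset.smul_sum]
    exact Finset.sum_congr rfl fun i _ => (smul_smul β (lam i) _)
  · have hβp : (|β| ^ p) ^ (1/p) = |β| := by
      rw [← Real.rpow_mul (abs_nonneg β), mul_one_div, div_self (by linarith : p ≠ 0),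
        Real.rpow_one]
    have hAnn : 0 ≤ ∑ i, |lam i| ^ p * dist (x i) (x' i) ^ p :=
      Finset.sum_nonneg fun i _ =>
        mul_nonneg (Real.rpow_nonneg (abs_nonneg _) _) (Real.rpow_nonneg dist_nonneg _)
    have hsum : (∑ i, |β * lam i| ^ p * dist (x i) (x' i) ^ p)
        = |β| ^ p * ∑ i, |lam i| ^ p * dist (x i) (x' i) ^ p := by
      rw [Finset.mul_sum]
      refine Finset.sum_congr rfl fun i _ => ?_
      rw [abs_mul, Real.mul_rpow (abs_nonneg _) (abs_nonneg _), mul_assoc]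
    rw [hsum, Real.mul_rpow (Real.rpow_nonneg (abs_nonneg _) _) hAnn, hβp, mul_assoc]

lemma repSet_smul_eq {p : ℝ} (hp : 1 ≤ p) {α : ℝ} (hα : α ≠ 0) (m : X →₀ Y) :
    repSet p (α • m) = |α| • repSet p m := by
  ext c; constructor
  · intro hc
    have h2 := smul_mem_repSet hp α⁻¹ hc
    rw [smul_smul, inv_mul_cancel₀ hα, one_smul] at h2
    refine ⟨|α⁻¹| * c, h2, ?_⟩
    show |α| • (|α⁻¹| * c) = c
    rw [smul_eq_mul, abs_inv, ← mul_assoc, mul_inv_cancel₀ (abs_ne_zero.2 hα), one_mul]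
  · rintro ⟨c', hc', rfl⟩
    simpa [smul_eq_mul] using smul_mem_repSet hp α hc'

lemma muNorm_smul {p : ℝ} (hp : 1 ≤ p) (α : ℝ) (m : X →₀ Y) :
    muNorm p (α • m) = |α| * muNorm p m := by
  rcases eq_or_ne α 0 with rfl | hα
  · simp [muNorm_zero hp]
  · rw [muNorm_def, muNorm_def, repSet_smul_eq hp hα,
      Real.sInf_smul_of_nonneg (abs_nonneg α), smul_eq_mul]

lemma rep_eq_zero_of_strong_zero {p : ℝ} (hp : 1 ≤ p) {n : ℕ} (lam : Fin n → ℝ)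
    (y : Fin n → Y) (x x' : Fin n → X)
    (h : (∑ i, |lam i| ^ p * dist (x i) (x' i) ^ p) ^ (1/p) = 0) :
    (∑ i, lam i • molAtom (x i) (x' i) (y i)) = 0 := by
  have hp0 : p ≠ 0 := by linarith
  have hAnn : ∀ i ∈ Finset.univ, (0:ℝ) ≤ |lam i| ^ p * dist (x i) (x' i) ^ p := fun i _ =>
    mul_nonneg (Real.rpow_nonneg (abs_nonneg _) _) (Real.rpow_nonneg dist_nonneg _)
  have hA : (∑ i, |lam i| ^ p * dist (x i) (x' i) ^ p) = 0 :=
    (Real.rpow_eq_zero (Finset.sum_nonneg hAnn) (one_div_ne_zero hp0)).1 h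
  refine Finset.sum_eq_zero fun i _ => ?_
  have hterm := (Finset.sum_eq_zero_iff_of_nonneg hAnn).1 hA i (Finset.mem_univ i)
  rcases mul_eq_zero.1 hterm with h1 | h2
  · have : lam i = 0 := abs_eq_zero.1 ((Real.rpow_eq_zero (abs_nonneg _) hp0).1 h1)
    simp [this]
  · have hx : x i = x' i := dist_eq_zero.1 ((Real.rpow_eq_zero dist_nonneg hp0).1 h2)
    rw [hx, molAtom_self, smul_zero]

lemma rep_eq_zero_of_weak_zero {p : ℝ} (hp : 1 ≤ p) {n : ℕ} {y : Fin n → Y}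
    (h : weakFactor p y = 0) (i : Fin n) : y i = 0 := by
  by_contra hy
  obtain ⟨g, hg1, hgy⟩ := exists_dual_vector ℝ (y i) (norm_ne_zero_iff.2 hy)
  set G : {g : Y →L[ℝ] ℝ // ‖g‖ ≤ 1} := ⟨g, hg1.le⟩ with hG
  have hpos : 0 < ‖y i‖ := norm_pos_iff.2 hy
  have habs : |g (y i)| = ‖y i‖ := by
    rw [hgy, RCLike.ofReal_real_eq_id]
    exact abs_of_nonneg (norm_nonneg _)
  rcases eq_or_lt_of_le hp with hp1 | hp1
  · subst hp1
    have h2 : ‖y i‖ ≤ weakFactor 1 y := by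
      refine le_trans ?_ (le_weakFactor_one y G)
      rw [← habs]
      exact le_ciSup (f := fun j => |G.1 (y j)|) (Set.Finite.bddAbove (Set.finite_range _)) i
    rw [h] at h2; linarith
  · set q : ℝ := p / (p - 1) with hq
    have hq0 : 0 < q := by
      apply div_pos <;> linarith
    have h2 : ‖y i‖ ≤ weakFactor p y := by
      refine le_trans ?_ (le_weakFactor_q hp1 y G)
      have e1 : ‖y i‖ = (|g (y i)| ^ q) ^ (1/q) := by
        rw [habs, ← Real.rpow_mul (norm_nonneg _), mul_one_div, div_self hq0.ne',
          Real.rpow_one]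
      rw [e1]
      refine Real.rpow_le_rpow (Real.rpow_nonneg (abs_nonneg _) _) ?_
        (one_div_nonneg.2 hq0.le)
      exact Finset.single_le_sum (f := fun j => |G.1 (y j)| ^ q)
        (fun j _ => Real.rpow_nonneg (abs_nonneg _) _) (Finset.mem_univ i)
    rw [h] at h2; linarith

lemma append_mem_repSet {p : ℝ} {m₁ m₂ : X →₀ Y} {n₁ n₂ : ℕ}
    {lam₁ : Fin n₁ → ℝ} {y₁ : Fin n₁ → Y} {x₁ x₁' : Fin n₁ → X}
    {lam₂ : Fin n₂ → ℝ} {y₂ : Fin n₂ → Y} {x₂ x₂' : Fin n₂ → X}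
    (hrep₁ : m₁ = ∑ i, lam₁ i • molAtom (x₁ i) (x₁' i) (y₁ i))
    (hrep₂ : m₂ = ∑ i, lam₂ i • molAtom (x₂ i) (x₂' i) (y₂ i))
    {t₁ t₂ : ℝ} (ht₁ : 0 < t₁) (ht₂ : 0 < t₂) :
    ((t₁ ^ p * (∑ i, |lam₁ i| ^ p * dist (x₁ i) (x₁' i) ^ p)
      + t₂ ^ p * (∑ i, |lam₂ i| ^ p * dist (x₂ i) (x₂' i) ^ p)) ^ (1/p)
      * weakFactor p (Fin.append (fun i => t₁⁻¹ • y₁ i) (fun i => t₂⁻¹ • y₂ i)))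
      ∈ repSet p (m₁ + m₂) := by
  refine ⟨n₁ + n₂, Fin.append (fun i => t₁ * lam₁ i) (fun i => t₂ * lam₂ i),
    Fin.append (fun i => t₁⁻¹ • y₁ i) (fun i => t₂⁻¹ • y₂ i),
    Fin.append x₁ x₂, Fin.append x₁' x₂', ?_, ?_⟩
  · rw [hrep₁, hrep₂, Fin.sum_univ_add]
    congr 1
    · refine Finset.sum_congr rfl fun i _ => ?_
      simp only [Fin.append_left, molAtom_smul, smul_smul]
      congr 1
      field_simp
    · refine Finset.sum_congr rfl fun i _ => ?_
      simp only [Fin.append_right, molAtom_smul, smul_smul]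
      congr 1
      field_simp
  · congr 2
    rw [Fin.sum_univ_add]
    congr 1
    · rw [Finset.mul_sum]
      refine Finset.sum_congr rfl fun i _ => ?_
      simp only [Fin.append_left]
      rw [abs_mul, abs_of_pos ht₁, Real.mul_rpow ht₁.le (abs_nonneg _), mul_assoc]
    · rw [Finset.mul_sum]
      refine Finset.sum_congr rfl fun i _ => ?_
      simp only [Fin.append_right]
      rw [abs_mul, abs_of_pos ht₂, Real.mul_rpow ht₂.le (abs_nonneg _), mul_assoc]

lemma weakFactor_smul_le (p : ℝ) (hp : 1 ≤ p) {n : ℕ} (c : ℝ) (z : Fin n → Y) :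
    weakFactor p (fun i => c • z i) ≤ |c| * weakFactor p z := by
  rcases eq_or_lt_of_le hp with hp1 | hp1
  · subst hp1
    rw [weakFactor, if_pos rfl]
    refine Real.iSup_le (fun g => ?_)
      (mul_nonneg (abs_nonneg _) (weakFactor_nonneg _ _))
    refine Real.iSup_le (fun i => ?_)
      (mul_nonneg (abs_nonneg _) (weakFactor_nonneg _ _))
    have : |g.1 (c • z i)| = |c| * |g.1 (z i)| := by
      rw [map_smul, smul_eq_mul, abs_mul]
    rw [this]
    refine mul_le_mul_of_nonneg_left ?_ (abs_nonneg _)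
    exact le_trans (le_ciSup (f := fun j => |g.1 (z j)|)
      (Set.Finite.bddAbove (Set.finite_range _)) i) (le_weakFactor_one z g)
  · have hq0 : 0 < p / (p - 1) := by apply div_pos <;> linarith
    set q : ℝ := p / (p - 1)
    rw [weakFactor, if_neg (by linarith : p ≠ 1)]
    refine Real.iSup_le (fun g => ?_)
      (mul_nonneg (abs_nonneg _) (weakFactor_nonneg _ _))
    have e1 : (∑ i, |g.1 (c • z i)| ^ q) = |c| ^ q * ∑ i, |g.1 (z i)| ^ q := by
      rw [Finset.mul_sum]
      refine Finset.sum_congr rfl fun i _ => ?_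
      rw [map_smul, smul_eq_mul, abs_mul, Real.mul_rpow (abs_nonneg _) (abs_nonneg _)]
    have e2 : ((|c| ^ q) ^ (1/q)) = |c| := by
      rw [← Real.rpow_mul (abs_nonneg c), mul_one_div, div_self hq0.ne', Real.rpow_one]
    rw [e1, Real.mul_rpow (Real.rpow_nonneg (abs_nonneg _) _)
      (Finset.sum_nonneg fun i _ => Real.rpow_nonneg (abs_nonneg _) _), e2]
    exact mul_le_mul_of_nonneg_left (le_weakFactor_q hp1 z g) (abs_nonneg _)

lemma weakFactor_append_le_one {n₁ n₂ : ℕ} (z₁ : Fin n₁ → Y) (z₂ : Fin n₂ → Y)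
    {W₁ W₂ : ℝ} (h₁ : weakFactor 1 z₁ ≤ W₁) (h₂ : weakFactor 1 z₂ ≤ W₂) :
    weakFactor 1 (Fin.append z₁ z₂) ≤ max W₁ W₂ := by
  have hW : 0 ≤ max W₁ W₂ := le_trans (weakFactor_nonneg _ _) (le_trans h₁ (le_max_left _ _))
  rw [weakFactor, if_pos rfl]
  refine Real.iSup_le (fun g => ?_) hW
  refine Real.iSup_le (fun i => ?_) hW
  refine Fin.addCases (fun i => ?_) (fun i => ?_) i
  · rw [Fin.append_left]
    refine le_trans (le_ciSup (f := fun j => |g.1 (z₁ j)|)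
      (Set.Finite.bddAbove (Set.finite_range _)) i)
      (le_trans (le_weakFactor_one z₁ g) (le_trans h₁ (le_max_left _ _)))
  · rw [Fin.append_right]
    refine le_trans (le_ciSup (f := fun j => |g.1 (z₂ j)|)
      (Set.Finite.bddAbove (Set.finite_range _)) i)
      (le_trans (le_weakFactor_one z₂ g) (le_trans h₂ (le_max_right _ _)))

lemma weakFactor_append_le_q {p : ℝ} (hp : 1 < p) {n₁ n₂ : ℕ} (z₁ : Fin n₁ → Y)
    (z₂ : Fin n₂ → Y) {W₁ W₂ : ℝ} (hW₁ : 0 ≤ W₁) (hW₂ : 0 ≤ W₂)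
    (h₁ : weakFactor p z₁ ≤ W₁) (h₂ : weakFactor p z₂ ≤ W₂) :
    weakFactor p (Fin.append z₁ z₂) ≤
      (W₁ ^ (p / (p-1)) + W₂ ^ (p / (p-1))) ^ (1 / (p / (p-1))) := by
  have hq0 : 0 < p / (p - 1) := by apply div_pos <;> linarith
  set q : ℝ := p / (p - 1) with hq
  have hB : 0 ≤ (W₁ ^ q + W₂ ^ q) ^ (1/q) :=
    Real.rpow_nonneg (add_nonneg (Real.rpow_nonneg hW₁ _) (Real.rpow_nonneg hW₂ _)) _
  rw [weakFactor, if_neg (by linarith : p ≠ 1)]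
  refine Real.iSup_le (fun g => ?_) hB
  have key : ∀ (n : ℕ) (z : Fin n → Y) (W : ℝ), 0 ≤ W → weakFactor p z ≤ W →
      (∑ i, |g.1 (z i)| ^ q) ≤ W ^ q := by
    intro n z W hW h
    have h1 : (∑ i, |g.1 (z i)| ^ q) ^ (1/q) ≤ W := le_trans (le_weakFactor_q hp z g) h
    have hnn : 0 ≤ ∑ i, |g.1 (z i)| ^ q :=
      Finset.sum_nonneg fun i _ => Real.rpow_nonneg (abs_nonneg _) _
    have := Real.rpow_le_rpow (Real.rpow_nonneg hnn _) h1 hq0.le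
    rwa [← Real.rpow_mul hnn, one_div_mul_cancel hq0.ne', Real.rpow_one] at this
  have e : (∑ i, |g.1 (Fin.append z₁ z₂ i)| ^ q)
      = (∑ i, |g.1 (z₁ i)| ^ q) + (∑ i, |g.1 (z₂ i)| ^ q) := by
    rw [Fin.sum_univ_add]
    congr 1 <;> exact Finset.sum_congr rfl fun i _ => by simp [Fin.append_left, Fin.append_right]
  rw [e]
  refine Real.rpow_le_rpow (add_nonneg (Finset.sum_nonneg fun i _ => Real.rpow_nonneg (abs_nonneg _) _)
    (Finset.sum_nonneg fun i _ => Real.rpow_nonneg (abs_nonneg _) _))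
    (add_le_add (key _ z₁ W₁ hW₁ h₁) (key _ z₂ W₂ hW₂ h₂)) (one_div_nonneg.2 hq0.le)

lemma muNorm_add_le_of_mem {p : ℝ} (hp : 1 ≤ p) {m₁ m₂ : X →₀ Y} {c₁ c₂ : ℝ}
    (h₁ : c₁ ∈ repSet p m₁) (h₂ : c₂ ∈ repSet p m₂) :
    muNorm p (m₁ + m₂) ≤ c₁ + c₂ := by
  have hp0 : (0:ℝ) < p := by linarith
  have hc₁0 : 0 ≤ c₁ := repSet_nonneg p m₁ c₁ h₁
  have hc₂0 : 0 ≤ c₂ := repSet_nonneg p m₂ c₂ h₂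
  obtain ⟨n₁, lam₁, y₁, x₁, x₁', hrep₁, hc₁e⟩ := h₁
  obtain ⟨n₂, lam₂, y₂, x₂, x₂', hrep₂, hc₂e⟩ := h₂
  by_cases hz₁ : (∑ i, |lam₁ i| ^ p * dist (x₁ i) (x₁' i) ^ p) ^ (1/p) = 0
      ∨ weakFactor p y₁ = 0
  · have hm₁ : m₁ = 0 := by
      rcases hz₁ with h | h
      · rw [hrep₁]; exact rep_eq_zero_of_strong_zero hp _ _ _ _ h
      · rw [hrep₁]
        refine Finset.sum_eq_zero fun i _ => ?_
        rw [rep_eq_zero_of_weak_zero hp h i]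
        simp [molAtom]
    have hc₁z : c₁ = 0 := by
      rw [hc₁e]
      rcases hz₁ with h | h
      · rw [h, zero_mul]
      · rw [h, mul_zero]
    rw [hm₁, zero_add, hc₁z, zero_add, muNorm_def]
    exact csInf_le (repSet_bddBelow _ _) ⟨n₂, lam₂, y₂, x₂, x₂', hrep₂, hc₂e⟩
  by_cases hz₂ : (∑ i, |lam₂ i| ^ p * dist (x₂ i) (x₂' i) ^ p) ^ (1/p) = 0
      ∨ weakFactor p y₂ = 0
  · have hm₂ : m₂ = 0 := by
      rcases hz₂ with h | h
      · rw [hrep₂]; exact rep_eq_zero_of_strong_zero hp _ _ _ _ h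
      · rw [hrep₂]
        refine Finset.sum_eq_zero fun i _ => ?_
        rw [rep_eq_zero_of_weak_zero hp h i]
        simp [molAtom]
    have hc₂z : c₂ = 0 := by
      rw [hc₂e]
      rcases hz₂ with h | h
      · rw [h, zero_mul]
      · rw [h, mul_zero]
    rw [hm₂, add_zero, hc₂z, add_zero, muNorm_def]
    exact csInf_le (repSet_bddBelow _ _) ⟨n₁, lam₁, y₁, x₁, x₁', hrep₁, hc₁e⟩
  push_neg at hz₁ hz₂
  set S₁ := ∑ i, |lam₁ i| ^ p * dist (x₁ i) (x₁' i) ^ p with hS₁def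
  set S₂ := ∑ i, |lam₂ i| ^ p * dist (x₂ i) (x₂' i) ^ p with hS₂def
  set w₁ := weakFactor p y₁ with hw₁def
  set w₂ := weakFactor p y₂ with hw₂def
  have hS₁nn : 0 ≤ S₁ := Finset.sum_nonneg fun i _ =>
    mul_nonneg (Real.rpow_nonneg (abs_nonneg _) _) (Real.rpow_nonneg dist_nonneg _)
  have hS₂nn : 0 ≤ S₂ := Finset.sum_nonneg fun i _ =>
    mul_nonneg (Real.rpow_nonneg (abs_nonneg _) _) (Real.rpow_nonneg dist_nonneg _)
  set s₁ := S₁ ^ (1/p) with hs₁def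
  set s₂ := S₂ ^ (1/p) with hs₂def
  have hs₁ : 0 < s₁ := (Real.rpow_nonneg hS₁nn _).lt_of_ne (Ne.symm hz₁.1)
  have hs₂ : 0 < s₂ := (Real.rpow_nonneg hS₂nn _).lt_of_ne (Ne.symm hz₂.1)
  have hw₁ : 0 < w₁ := (weakFactor_nonneg p y₁).lt_of_ne (Ne.symm hz₁.2)
  have hw₂ : 0 < w₂ := (weakFactor_nonneg p y₂).lt_of_ne (Ne.symm hz₂.2)
  have hd₁ : 0 < s₁ * w₁ := mul_pos hs₁ hw₁
  have hd₂ : 0 < s₂ * w₂ := mul_pos hs₂ hw₂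
  set t₁ := (s₁ * w₁) ^ (1/p) / s₁ with ht₁def
  set t₂ := (s₂ * w₂) ^ (1/p) / s₂ with ht₂def
  have ht₁ : 0 < t₁ := div_pos (Real.rpow_pos_of_pos hd₁ _) hs₁
  have ht₂ : 0 < t₂ := div_pos (Real.rpow_pos_of_pos hd₂ _) hs₂
  have hroundtrip : ∀ a : ℝ, 0 ≤ a → (a ^ (1/p)) ^ p = a := fun a ha => by
    rw [← Real.rpow_mul ha, one_div_mul_cancel hp0.ne', Real.rpow_one]
  have hSs₁ : s₁ ^ p = S₁ := by rw [hs₁def]; exact hroundtrip S₁ hS₁nn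
  have hSs₂ : s₂ ^ p = S₂ := by rw [hs₂def]; exact hroundtrip S₂ hS₂nn
  have hK1₁ : t₁ ^ p * S₁ = s₁ * w₁ := by
    rw [← hSs₁, ← Real.mul_rpow ht₁.le hs₁.le, ht₁def, div_mul_cancel₀ _ hs₁.ne',
      hroundtrip _ hd₁.le]
  have hK1₂ : t₂ ^ p * S₂ = s₂ * w₂ := by
    rw [← hSs₂, ← Real.mul_rpow ht₂.le hs₂.le, ht₂def, div_mul_cancel₀ _ hs₂.ne',
      hroundtrip _ hd₂.le]
  have hK2₁ : t₁⁻¹ * w₁ = (s₁ * w₁) ^ (1 - 1/p) := by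
    rw [ht₁def, inv_div, Real.rpow_sub hd₁, Real.rpow_one, div_mul_eq_mul_div]
  have hK2₂ : t₂⁻¹ * w₂ = (s₂ * w₂) ^ (1 - 1/p) := by
    rw [ht₂def, inv_div, Real.rpow_sub hd₂, Real.rpow_one, div_mul_eq_mul_div]
  have hmem := append_mem_repSet (p := p) hrep₁ hrep₂ ht₁ ht₂
  rw [← hS₁def, ← hS₂def, hK1₁, hK1₂] at hmem
  set Wnew := weakFactor p (Fin.append (fun i => t₁⁻¹ • y₁ i) (fun i => t₂⁻¹ • y₂ i))
    with hWnewdef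
  have hle := csInf_le (repSet_bddBelow p (m₁ + m₂)) hmem
  rw [muNorm_def, hc₁e, hc₂e]
  refine le_trans hle ?_
  set D := s₁ * w₁ + s₂ * w₂ with hDdef
  have hD : 0 < D := by rw [hDdef]; exact add_pos hd₁ hd₂
  rcases eq_or_lt_of_le hp with hp1 | hp1
  · -- p = 1
    have hW1 : Wnew ≤ 1 := by
      have h1 : weakFactor p (fun i => t₁⁻¹ • y₁ i) ≤ 1 := by
        refine le_trans (weakFactor_smul_le p hp t₁⁻¹ y₁) ?_
        rw [← hw₁def, abs_of_pos (inv_pos.2 ht₁), hK2₁, ← hp1]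
        norm_num
      have h2 : weakFactor p (fun i => t₂⁻¹ • y₂ i) ≤ 1 := by
        refine le_trans (weakFactor_smul_le p hp t₂⁻¹ y₂) ?_
        rw [← hw₂def, abs_of_pos (inv_pos.2 ht₂), hK2₂, ← hp1]
        norm_num
      rw [hWnewdef, ← hp1] at *
      exact le_trans (weakFactor_append_le_one _ _ h1 h2) (by norm_num)
    calc D ^ (1/p) * Wnew = D * Wnew := by rw [← hp1]; norm_num
      _ ≤ D * 1 := mul_le_mul_of_nonneg_left hW1 hD.le
      _ = D := mul_one D
  · -- p > 1
    have hq0 : 0 < p / (p - 1) := div_pos (by linarith) (by linarith)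
    have h1q : 1 - 1/p = 1 / (p / (p - 1)) := by
      rw [one_div_div]
      field_simp
    have hrtq : ∀ a : ℝ, 0 < a → (a ^ (1 / (p / (p-1)))) ^ (p / (p-1)) = a := fun a ha => by
      rw [← Real.rpow_mul ha.le, one_div_mul_cancel hq0.ne', Real.rpow_one]
    have hb₁ : weakFactor p (fun i => t₁⁻¹ • y₁ i) ≤ t₁⁻¹ * w₁ := by
      refine le_trans (weakFactor_smul_le p hp t₁⁻¹ y₁) ?_
      rw [← hw₁def, abs_of_pos (inv_pos.2 ht₁)]
    have hb₂ : weakFactor p (fun i => t₂⁻¹ • y₂ i) ≤ t₂⁻¹ * w₂ := by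
      refine le_trans (weakFactor_smul_le p hp t₂⁻¹ y₂) ?_
      rw [← hw₂def, abs_of_pos (inv_pos.2 ht₂)]
    have hWq : Wnew ≤ D ^ (1 / (p / (p-1))) := by
      have happ := weakFactor_append_le_q hp1 (fun i => t₁⁻¹ • y₁ i) (fun i => t₂⁻¹ • y₂ i)
        (mul_nonneg (inv_pos.2 ht₁).le hw₁.le) (mul_nonneg (inv_pos.2 ht₂).le hw₂.le) hb₁ hb₂
      rw [← hWnewdef] at happ
      refine le_trans happ ?_
      rw [hK2₁, hK2₂, h1q, hrtq _ hd₁, hrtq _ hd₂, ← hDdef]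
    calc D ^ (1/p) * Wnew ≤ D ^ (1/p) * D ^ (1 / (p / (p-1))) :=
        mul_le_mul_of_nonneg_left hWq (Real.rpow_nonneg hD.le _)
      _ = D ^ (1/p + 1 / (p / (p-1))) := (Real.rpow_add hD _ _).symm
      _ = D ^ (1:ℝ) := by rw [show 1/p + 1 / (p / (p-1)) = 1 by rw [← h1q]; ring]
      _ = D := Real.rpow_one D

/-- `μ_p` is a norm on the space of `Y`-valued molecules on `X`. -/
theorem muNorm_is_norm [CompleteSpace Y] (x0 : X) (p : ℝ) (hp : 1 ≤ p) :
    (∀ m ∈ MolSpace X Y, 0 ≤ muNorm p m) ∧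
    (∀ m ∈ MolSpace X Y, muNorm p m = 0 → m = 0) ∧
    (∀ (α : ℝ), ∀ m ∈ MolSpace X Y, muNorm p (α • m) = |α| * muNorm p m) ∧
    (∀ m₁ ∈ MolSpace X Y, ∀ m₂ ∈ MolSpace X Y,
      muNorm p (m₁ + m₂) ≤ muNorm p m₁ + muNorm p m₂) := by
  refine ⟨fun m _ => muNorm_nonneg p m, fun m hm h0 => muNorm_eq_zero_imp hp x0 hm h0,
    fun α m _ => muNorm_smul hp α m, fun m₁ hm₁ m₂ hm₂ => ?_⟩
  obtain ⟨n₁, lam₁, y₁, xa₁, xb₁, hrep₁⟩ := exists_rep x0 hm₁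
  obtain ⟨n₂, lam₂, y₂, xa₂, xb₂, hrep₂⟩ := exists_rep x0 hm₂
  have hne₁ : (repSet p m₁).Nonempty := ⟨_, n₁, lam₁, y₁, xa₁, xb₁, hrep₁, rfl⟩
  have hne₂ : (repSet p m₂).Nonempty := ⟨_, n₂, lam₂, y₂, xa₂, xb₂, hrep₂, rfl⟩
  have key : ∀ c₁ ∈ repSet p m₁, ∀ c₂ ∈ repSet p m₂, muNorm p (m₁ + m₂) ≤ c₁ + c₂ :=
    fun c₁ h₁ c₂ h₂ => muNorm_add_le_of_mem hp h₁ h₂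
  have h1 : muNorm p (m₁ + m₂) - sInf (repSet p m₂) ≤ sInf (repSet p m₁) := by
    refine le_csInf hne₁ fun c₁ h₁ => ?_
    rw [sub_le_iff_le_add]
    have h2 : muNorm p (m₁ + m₂) - c₁ ≤ sInf (repSet p m₂) :=
      le_csInf hne₂ fun c₂ h₂ => by have := key c₁ h₁ c₂ h₂; linarith
    linarith
  rw [show muNorm p m₁ = sInf (repSet p m₁) from rfl,
    show muNorm p m₂ = sInf (repSet p m₂) from rfl]
  linarith


end
end

section
/- (Ky Fan's Lemma) Let E be a Hausdorff topological real vector space and 𝒞 ⊆ E a nonempty compact convex subset. Let M be a set of functions from 𝒞 to (−∞, ∞] such that: (a) each f ∈ M is convex and lower semicontinuous on 𝒞; (b) for every finite convex combination g of elements of M there is an f ∈ M with g(x) ≤ f(x) for every x ∈ 𝒞; (c) there is r ∈ ℝ such that each f ∈ M attains a value not greater than r at some point of 𝒞. Then there exists x₀ ∈ 𝒞 such that f(x₀) ≤ r for all f ∈ M. -/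
/-!
STATEMENT 2: Ky Fan's Lemma.  `E` is a Hausdorff topological real vector space,
`𝒞 ⊆ E` a nonempty compact convex subset, and `M` a set of `(−∞,∞]`-valued
(we use `WithTop ℝ`) convex lower semicontinuous functions on `𝒞`, stable (up to
domination) under finite convex combinations, each of which attains a value `≤ r`
somewhere on `𝒞`.  Then some point `x₀ ∈ 𝒞` satisfies `f(x₀) ≤ r` for all `f ∈ M`.
-/

open scoped BigOperators

open Set Filter

local notation "WT" => WithTop ℝ

lemma wt_mul_add (c : ℝ) (A B : WT) : (c : WT) * (A + B) = c * A + c * B := by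
  rcases eq_or_ne c 0 with rfl | hc
  · simp
  · have hc' : (c : WT) ≠ 0 := by exact_mod_cast hc
    induction A using WithTop.recTopCoe with
    | top => rw [WithTop.top_add, WithTop.mul_top hc', WithTop.top_add]
    | coe a =>
      induction B using WithTop.recTopCoe with
      | top => rw [WithTop.add_top, WithTop.mul_top hc', WithTop.add_top]
      | coe b =>
        rw [← WithTop.coe_add, ← WithTop.coe_mul, ← WithTop.coe_mul, ← WithTop.coe_mul,
          ← WithTop.coe_add, mul_add]

lemma wt_mul_sum {ι : Type*} (c : ℝ) (s : Finset ι) (f : ι → WT) :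
    (c : WT) * ∑ j ∈ s, f j = ∑ j ∈ s, (c : WT) * f j := by
  classical
  induction s using Finset.induction with
  | empty => simp
  | insert _ _ h ih => rw [Finset.sum_insert h, Finset.sum_insert h, wt_mul_add, ih]

lemma wt_mul_le_mul (c : ℝ) (hc : 0 ≤ c) {A B : WT} (h : A ≤ B) : (c : WT) * A ≤ c * B := by
  rcases eq_or_ne c 0 with rfl | hc0
  · simp
  · induction B using WithTop.recTopCoe with
    | top => exact le_top.trans_eq (WithTop.mul_top (by exact_mod_cast hc0)).symm
    | coe b =>
      induction A using WithTop.recTopCoe with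
      | top => exact absurd h (by simp)
      | coe a =>
        rw [← WithTop.coe_mul, ← WithTop.coe_mul, WithTop.coe_le_coe]
        exact mul_le_mul_of_nonneg_left (by exact_mod_cast h) hc

lemma wt_lt_mul (c : ℝ) (hc : 0 < c) (b : ℝ) {A : WT} (h : (b : WT) < A) :
    ((c * b : ℝ) : WT) < (c : WT) * A := by
  induction A using WithTop.recTopCoe with
  | top =>
    rw [WithTop.mul_top (by exact_mod_cast hc.ne' : (c:WT) ≠ 0)]
    exact WithTop.coe_lt_top _
  | coe a =>
    rw [← WithTop.coe_mul, WithTop.coe_lt_coe]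
    exact mul_lt_mul_of_pos_left (by exact_mod_cast h) hc

lemma wt_add_lt_add {a b : ℝ} {A B : WT} (hA : (a : WT) < A) (hB : (b : WT) < B) :
    ((a + b : ℝ) : WT) < A + B := by
  induction A using WithTop.recTopCoe with
  | top => rw [top_add]; exact WithTop.coe_lt_top _
  | coe a' =>
    induction B using WithTop.recTopCoe with
    | top => rw [add_top]; exact WithTop.coe_lt_top _
    | coe b' =>
      rw [← WithTop.coe_add, WithTop.coe_lt_coe]
      exact add_lt_add (by exact_mod_cast hA) (by exact_mod_cast hB)

lemma wt_coe_mul_assoc (a b : ℝ) (A : WT) : ((a * b : ℝ) : WT) * A = (a : WT) * ((b : WT) * A) := by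
  rw [WithTop.coe_mul, mul_assoc]


/-- From `y < A + B` find real strict lower bounds with sum at least `y`. -/
lemma wt_exists_lt_lt {y : WT} {A B : WT} (h : y < A + B) :
    ∃ a b : ℝ, (a : WT) < A ∧ (b : WT) < B ∧ y ≤ ((a + b : ℝ) : WT) := by
  have hy : y ≠ ⊤ := h.ne_top
  lift y to ℝ using hy with c
  induction A using WithTop.recTopCoe with
  | top =>
    induction B using WithTop.recTopCoe with
    | top => exact ⟨c, 0, WithTop.coe_lt_top _, WithTop.coe_lt_top _, by norm_num⟩
    | coe v => exact ⟨c - (v - 1), v - 1, WithTop.coe_lt_top _, by exact_mod_cast sub_one_lt v,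
        by rw [WithTop.coe_le_coe]; linarith⟩
  | coe u =>
    induction B using WithTop.recTopCoe with
    | top => exact ⟨u - 1, c - (u - 1), by exact_mod_cast sub_one_lt u, WithTop.coe_lt_top _,
        by rw [WithTop.coe_le_coe]; linarith⟩
    | coe v =>
      have hc : c < u + v := by exact_mod_cast h
      refine ⟨u - (u + v - c) / 2, v - (u + v - c) / 2, ?_, ?_, ?_⟩
      · exact_mod_cast sub_lt_self u (by linarith)
      · exact_mod_cast sub_lt_self v (by linarith)
      · rw [WithTop.coe_le_coe]; linarith

section lsc
variable {X : Type*} [TopologicalSpace X] {D : Set X}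

lemma lsc_add {F G : X → WT} (hF : LowerSemicontinuousOn F D)
    (hG : LowerSemicontinuousOn G D) :
    LowerSemicontinuousOn (fun x => F x + G x) D := by
  intro x hx y hy
  obtain ⟨a, b, ha, hb, hy'⟩ := wt_exists_lt_lt hy
  filter_upwards [hF x hx a ha, hG x hx b hb] with z hza hzb
  exact hy'.trans_lt (wt_add_lt_add hza hzb)

lemma lsc_const_mul {F : X → WT} (hF : LowerSemicontinuousOn F D) {c : ℝ} (hc : 0 ≤ c) :
    LowerSemicontinuousOn (fun x => (c : WT) * F x) D := by
  rcases hc.eq_or_lt with rfl | hc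
  · simpa using lowerSemicontinuousOn_const
  · intro x hx y hy
    have hy' : y ≠ ⊤ := hy.ne_top
    lift y to ℝ using hy' with d
    -- find a : ℝ, a < F x and d ≤ c * a
    obtain ⟨a, ha, hda⟩ : ∃ a : ℝ, (a : WT) < F x ∧ d ≤ c * a := by
      rcases eq_or_ne (F x) ⊤ with hFx | hFx
      · exact ⟨d / c, by rw [hFx]; exact WithTop.coe_lt_top _,
          by rw [mul_div_cancel₀ _ hc.ne']⟩
      · obtain ⟨u, hFx⟩ := WithTop.ne_top_iff_exists.mp hFx
        have hdu : d < c * u := by rw [← hFx] at hy; exact_mod_cast hy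
        have hdc : d / c < u := (div_lt_iff₀' hc).mpr hdu
        refine ⟨(d / c + u) / 2, ?_, ?_⟩
        · rw [← hFx, WithTop.coe_lt_coe]; linarith
        · rw [← div_le_iff₀' hc]; linarith
    filter_upwards [hF x hx a ha] with z hz
    calc (d : WT) ≤ ((c * a : ℝ) : WT) := by exact_mod_cast hda
      _ < (c : WT) * F z := wt_lt_mul c hc a hz

lemma lsc_combo {n : ℕ} {F : Fin n → X → WT} (hF : ∀ j, LowerSemicontinuousOn (F j) D)
    (t : Fin n → ℝ) (ht : ∀ j, 0 ≤ t j) :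
    LowerSemicontinuousOn (fun x => ∑ j, (t j : WT) * F j x) D := by
  induction n with
  | zero => simpa using lowerSemicontinuousOn_const
  | succ n ih =>
    have := lsc_add (ih (fun j => hF j.castSucc) (fun j => t j.castSucc) (fun j => ht _))
      (lsc_const_mul (hF (Fin.last n)) (ht (Fin.last n)))
    convert this using 2 with x
    rw [Fin.sum_univ_castSucc]

/-- sublevel sets of an lsc function on a closed set are closed. -/
lemma lsc_sublevel_closed (hD : IsClosed D) {F : X → WT} (hF : LowerSemicontinuousOn F D)
    (r : ℝ) : IsClosed {x | x ∈ D ∧ F x ≤ (r : WT)} := by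
  refine isClosed_of_closure_subset ?_
  intro x hx
  have hxD : x ∈ D := hD.closure_subset (closure_mono (fun z hz => hz.1) hx)
  refine ⟨hxD, ?_⟩
  by_contra hcon
  push_neg at hcon
  have hev := hF x hxD r hcon
  rw [eventually_iff, mem_nhdsWithin] at hev
  obtain ⟨U, hU, hxU, hUsub⟩ := hev
  obtain ⟨z, hzU, hzD, hzr⟩ := mem_closure_iff_nhds.mp hx U (hU.mem_nhds hxU)
  exact absurd hzr (not_le.mpr (hUsub ⟨hzU, hzD⟩))

end lsc


section conv
variable {E : Type*} [AddCommGroup E] [Module ℝ E]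

/-- convexity inequality for a `WithTop ℝ`-valued function on a set. -/
def ConvIneqOn (D : Set E) (f : E → WT) : Prop :=
  ∀ x ∈ D, ∀ y ∈ D, ∀ t : ℝ, 0 ≤ t → t ≤ 1 →
    f (t • x + (1 - t) • y) ≤ (t : WT) * f x + ((1 - t : ℝ) : WT) * f y

lemma convIneqOn_mono {D D' : Set E} (h : D' ⊆ D) {f : E → WT} (hf : ConvIneqOn D f) :
    ConvIneqOn D' f := fun x hx y hy => hf x (h hx) y (h hy)

lemma convIneqOn_combo {D : Set E} {n : ℕ} {F : Fin n → E → WT}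
    (hF : ∀ j, ConvIneqOn D (F j)) (t : Fin n → ℝ) (ht : ∀ j, 0 ≤ t j) :
    ConvIneqOn D (fun x => ∑ j, (t j : WT) * F j x) := by
  intro x hx y hy s hs0 hs1
  calc ∑ j, (t j : WT) * F j (s • x + (1 - s) • y)
      ≤ ∑ j, (t j : WT) * ((s : WT) * F j x + ((1 - s : ℝ) : WT) * F j y) :=
        Finset.sum_le_sum fun j _ => wt_mul_le_mul (t j) (ht j) (hF j x hx y hy s hs0 hs1)
    _ = ∑ j, ((s : WT) * ((t j : WT) * F j x) + ((1 - s : ℝ) : WT) * ((t j : WT) * F j y)) := by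
        refine Finset.sum_congr rfl fun j _ => ?_
        rw [wt_mul_add, ← wt_coe_mul_assoc, ← wt_coe_mul_assoc, mul_comm (t j) s,
          mul_comm (t j) (1 - s), wt_coe_mul_assoc, wt_coe_mul_assoc]
    _ = (s : WT) * ∑ j, (t j : WT) * F j x + ((1 - s : ℝ) : WT) * ∑ j, (t j : WT) * F j y := by
        rw [Finset.sum_add_distrib, wt_mul_sum, wt_mul_sum]

lemma convex_sublevel {D : Set E} (hD : Convex ℝ D) {f : E → WT} (hf : ConvIneqOn D f)
    (r : ℝ) : Convex ℝ {x | x ∈ D ∧ f x ≤ (r : WT)} := by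
  intro x hx y hy a b ha hb hab
  have hb' : b = 1 - a := by linarith
  subst hb'
  refine ⟨hD hx.1 hy.1 ha hb hab, ?_⟩
  calc f (a • x + (1 - a) • y) ≤ (a : WT) * f x + ((1 - a : ℝ) : WT) * f y :=
        hf x hx.1 y hy.1 a ha (by linarith)
    _ ≤ (a : WT) * (r : WT) + ((1 - a : ℝ) : WT) * (r : WT) :=
        add_le_add (wt_mul_le_mul a ha hx.2) (wt_mul_le_mul _ hb hy.2)
    _ = ((a * r + (1 - a) * r : ℝ) : WT) := by rw [WithTop.coe_add, WithTop.coe_mul, WithTop.coe_mul]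
    _ = (r : WT) := by norm_num [← add_mul]

end conv

/-- choose real strict lower bounds witnessing `r < s₀*A + (1-s₀)*B`. -/
lemma wt_exists_pair_bounds {r s₀ : ℝ} (hs0 : 0 ≤ s₀) (hs1 : s₀ ≤ 1) {A B : WT}
    (h : (r : WT) < (s₀ : WT) * A + ((1 - s₀ : ℝ) : WT) * B) :
    ∃ a b : ℝ, (a : WT) < A ∧ (b : WT) < B ∧ r < s₀ * a + (1 - s₀) * b := by
  induction A using WithTop.recTopCoe with
  | top =>
    induction B using WithTop.recTopCoe with
    | top =>
      have : s₀ * (r+1) + (1 - s₀) * (r+1) = r + 1 := by ring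
      exact ⟨r + 1, r + 1, WithTop.coe_lt_top _, WithTop.coe_lt_top _, by linarith⟩
    | coe v =>
      rcases eq_or_lt_of_le hs0 with rfl | hs0'
      · have hrv : r < v := by
          have : (r : WT) < ((0:ℝ) : WT) * ⊤ + ((1:ℝ) : WT) * (v : WT) := by
            convert h using 3 <;> norm_num
          simpa using this
        exact ⟨r + 1, (r + v)/2, WithTop.coe_lt_top _, by exact_mod_cast (by linarith : (r+v)/2 < v),
          by norm_num; linarith⟩
      · refine ⟨(r - (1 - s₀) * (v - 1)) / s₀ + 1, v - 1, WithTop.coe_lt_top _,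
          by exact_mod_cast sub_one_lt v, ?_⟩
        have h1 : s₀ * ((r - (1 - s₀) * (v - 1)) / s₀) = r - (1 - s₀) * (v - 1) := by
          field_simp
        nlinarith [h1]
  | coe u =>
    induction B using WithTop.recTopCoe with
    | top =>
      rcases eq_or_lt_of_le hs1 with rfl | hs1'
      · have hru : r < u := by
          have : (r : WT) < ((1:ℝ) : WT) * (u : WT) + ((0:ℝ) : WT) * ⊤ := by
            convert h using 3 <;> norm_num
          simpa using this
        exact ⟨(r + u)/2, r + 1, by exact_mod_cast (by linarith : (r+u)/2 < u),
          WithTop.coe_lt_top _, by norm_num; linarith⟩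
      · have h1s : (0:ℝ) < 1 - s₀ := by linarith
        refine ⟨u - 1, (r - s₀ * (u - 1)) / (1 - s₀) + 1, by exact_mod_cast sub_one_lt u,
          WithTop.coe_lt_top _, ?_⟩
        have h1 : (1 - s₀) * ((r - s₀ * (u - 1)) / (1 - s₀)) = r - s₀ * (u - 1) := by
          field_simp
        nlinarith [h1]
    | coe v =>
      have hr : r < s₀ * u + (1 - s₀) * v := by exact_mod_cast h
      set ε := (s₀ * u + (1 - s₀) * v - r) / 2 with hε
      have hε0 : 0 < ε := by rw [hε]; linarith
      refine ⟨u - ε, v - ε, by exact_mod_cast sub_lt_self u hε0,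
        by exact_mod_cast sub_lt_self v hε0, by nlinarith⟩

section key
variable {E : Type*} [TopologicalSpace E]

lemma key_closed {D : Set E} (hD : IsClosed D) {F G : E → WT}
    (hF : LowerSemicontinuousOn F D) (hG : LowerSemicontinuousOn G D) (r : ℝ) :
    IsClosed {p : ℝ × E | p.1 ∈ Icc (0:ℝ) 1 ∧ p.2 ∈ D ∧
      (p.1 : WT) * F p.2 + ((1 - p.1 : ℝ) : WT) * G p.2 ≤ (r : WT)} := by
  refine isClosed_of_closure_subset ?_
  rintro ⟨s₀, x₀⟩ hp
  have hIccD : (s₀, x₀) ∈ (Icc (0:ℝ) 1) ×ˢ D := by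
    have : IsClosed ((Icc (0:ℝ) 1) ×ˢ D) := isClosed_Icc.prod hD
    exact this.closure_subset (closure_mono (fun q hq => Set.mem_prod.mpr ⟨hq.1, hq.2.1⟩) hp)
  obtain ⟨hs₀, hx₀⟩ := hIccD
  refine ⟨hs₀, hx₀, ?_⟩
  by_contra hcon
  push_neg at hcon
  obtain ⟨a, b, ha, hb, hab⟩ := wt_exists_pair_bounds hs₀.1 hs₀.2 hcon
  -- neighborhoods
  have hevF := hF x₀ hx₀ a ha
  have hevG := hG x₀ hx₀ b hb
  rw [eventually_iff, mem_nhdsWithin] at hevF hevG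
  obtain ⟨U, hUo, hxU, hUsub⟩ := hevF
  obtain ⟨V, hVo, hxV, hVsub⟩ := hevG
  have hWo : IsOpen {s : ℝ | r < s * a + (1 - s) * b} :=
    isOpen_lt continuous_const (by continuity)
  have hnhds : {s : ℝ | r < s * a + (1 - s) * b} ×ˢ (U ∩ V) ∈ nhds (s₀, x₀) :=
    prod_mem_nhds (hWo.mem_nhds hab) ((hUo.inter hVo).mem_nhds ⟨hxU, hxV⟩)
  obtain ⟨⟨s, x⟩, ⟨hsW, hxUV⟩, hsIcc, hxD, hle⟩ := mem_closure_iff_nhds.mp hp _ hnhds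
  have hFx : (a : WT) < F x := hUsub ⟨hxUV.1, hxD⟩
  have hGx : (b : WT) < G x := hVsub ⟨hxUV.2, hxD⟩
  have : (r : WT) < (s : WT) * F x + ((1 - s : ℝ) : WT) * G x := by
    calc (r : WT) < ((s * a + (1 - s) * b : ℝ) : WT) := by exact_mod_cast hsW
      _ = ((s * a : ℝ) : WT) + (((1 - s) * b : ℝ) : WT) := by rw [WithTop.coe_add]
      _ = (s : WT) * (a : WT) + ((1 - s : ℝ) : WT) * (b : WT) := by
          rw [WithTop.coe_mul, WithTop.coe_mul]
      _ ≤ (s : WT) * F x + ((1 - s : ℝ) : WT) * G x :=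
          add_le_add (wt_mul_le_mul s hsIcc.1 hFx.le) (wt_mul_le_mul _ (by linarith [hsIcc.2]) hGx.le)
  exact absurd hle this.not_ge

end key

section pair
variable {E : Type*} [AddCommGroup E] [Module ℝ E] [TopologicalSpace E]
  [IsTopologicalAddGroup E] [ContinuousSMul ℝ E] [T2Space E]

lemma convIneqOn_pair {D : Set E} {F G : E → WT} (hF : ConvIneqOn D F) (hG : ConvIneqOn D G)
    {s : ℝ} (hs0 : 0 ≤ s) (hs1 : s ≤ 1) :
    ConvIneqOn D (fun x => (s : WT) * F x + ((1 - s : ℝ) : WT) * G x) := by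
  have h := convIneqOn_combo (D := D) (F := ![F, G])
    (fun j => by fin_cases j <;> assumption) ![s, 1 - s]
    (fun j => by fin_cases j; exacts [hs0, by simp; linarith])
  simpa [ConvIneqOn, Fin.sum_univ_two] using h

lemma pair_lemma {D : Set E} (hDc : IsCompact D) (hDv : Convex ℝ D) {F G : E → WT}
    (hFc : ConvIneqOn D F) (hGc : ConvIneqOn D G)
    (hFl : LowerSemicontinuousOn F D) (hGl : LowerSemicontinuousOn G D) {r : ℝ}
    (hcombo : ∀ s : ℝ, 0 ≤ s → s ≤ 1 →
      ∃ x ∈ D, (s : WT) * F x + ((1 - s : ℝ) : WT) * G x ≤ (r : WT)) :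
    ∃ x ∈ D, F x ≤ (r : WT) ∧ G x ≤ (r : WT) := by
  by_contra hAB
  push_neg at hAB
  set A : Set E := {x | x ∈ D ∧ F x ≤ (r : WT)} with hAdef
  set B : Set E := {x | x ∈ D ∧ G x ≤ (r : WT)} with hBdef
  have hA : IsClosed A := lsc_sublevel_closed hDc.isClosed hFl r
  have hB : IsClosed B := lsc_sublevel_closed hDc.isClosed hGl r
  have hABempty : ∀ x, x ∈ A → x ∈ B → False := fun x hxA hxB =>
    (hAB x hxA.1 hxA.2).not_ge hxB.2
  set K : Set (ℝ × E) := {p : ℝ × E | p.1 ∈ Icc (0:ℝ) 1 ∧ p.2 ∈ D ∧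
      (p.1 : WT) * F p.2 + ((1 - p.1 : ℝ) : WT) * G p.2 ≤ (r : WT)} with hKdef
  have hK : IsClosed K := key_closed hDc.isClosed hFl hGl r
  -- every point of a sublevel set of a combination lies in A or B
  have hsub : ∀ s : ℝ, 0 ≤ s → s ≤ 1 → ∀ x ∈ D,
      (s : WT) * F x + ((1 - s : ℝ) : WT) * G x ≤ (r : WT) → x ∈ A ∨ x ∈ B := by
    intro s hs0 hs1 x hx hφ
    by_contra hc
    push_neg at hc
    have hFx : (r : WT) < F x := not_le.mp fun h => hc.1 ⟨hx, h⟩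
    have hGx : (r : WT) < G x := not_le.mp fun h => hc.2 ⟨hx, h⟩
    rcases eq_or_lt_of_le hs0 with rfl | hs0'
    · refine absurd hφ (not_le.mpr ?_)
      have : ((0:ℝ) : WT) * F x + ((1 - 0 : ℝ) : WT) * G x = G x := by norm_num
      rw [this]; exact hGx
    rcases eq_or_lt_of_le hs1 with rfl | hs1'
    · refine absurd hφ (not_le.mpr ?_)
      have : ((1:ℝ) : WT) * F x + ((1 - 1 : ℝ) : WT) * G x = F x := by norm_num
      rw [this]; exact hFx
    · refine absurd hφ (not_le.mpr ?_)
      have h1 : ((s * r + (1 - s) * r : ℝ) : WT) < (s : WT) * F x + ((1 - s : ℝ) : WT) * G x :=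
        wt_add_lt_add (wt_lt_mul s hs0' r hFx) (wt_lt_mul (1 - s) (by linarith) r hGx)
      have h2 : (s * r + (1 - s) * r : ℝ) = r := by ring
      rwa [h2] at h1
  set U : Set ℝ := Prod.fst '' (K ∩ Prod.snd ⁻¹' A) with hUdef
  set V : Set ℝ := Prod.fst '' (K ∩ Prod.snd ⁻¹' B) with hVdef
  have hUVclosed : ∀ (S : Set E), IsClosed S → IsClosed (Prod.fst '' (K ∩ Prod.snd ⁻¹' S)) := by
    intro S hS
    have h1 : IsClosed (K ∩ Prod.snd ⁻¹' S) := hK.inter (hS.preimage continuous_snd)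
    have h2 : (K ∩ Prod.snd ⁻¹' S) ⊆ (Icc (0:ℝ) 1) ×ˢ D := fun p hp =>
      Set.mem_prod.mpr ⟨hp.1.1, hp.1.2.1⟩
    have h3 : IsCompact (K ∩ Prod.snd ⁻¹' S) :=
      (isCompact_Icc.prod hDc).of_isClosed_subset h1 h2
    exact (h3.image continuous_fst).isClosed
  have hUc : IsClosed U := hUVclosed A hA
  have hVc : IsClosed V := hUVclosed B hB
  have hU1 : (1:ℝ) ∈ U := by
    obtain ⟨x, hx, hφ⟩ := hcombo 1 zero_le_one le_rfl
    have hF1 : F x ≤ (r : WT) := by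
      have : ((1:ℝ) : WT) * F x + ((1 - 1 : ℝ) : WT) * G x = F x := by norm_num
      rwa [this] at hφ
    exact ⟨(1, x), ⟨⟨⟨zero_le_one, le_rfl⟩, hx, hφ⟩, ⟨hx, hF1⟩⟩, rfl⟩
  have hV0 : (0:ℝ) ∈ V := by
    obtain ⟨x, hx, hφ⟩ := hcombo 0 le_rfl zero_le_one
    have hG0 : G x ≤ (r : WT) := by
      have : ((0:ℝ) : WT) * F x + ((1 - 0 : ℝ) : WT) * G x = G x := by norm_num
      rwa [this] at hφ
    exact ⟨(0, x), ⟨⟨⟨le_rfl, zero_le_one⟩, hx, hφ⟩, ⟨hx, hG0⟩⟩, rfl⟩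
  have hdisj : ∀ s : ℝ, s ∈ U → s ∈ V → False := by
    rintro s ⟨⟨s₁, xA⟩, ⟨hKA, hxA⟩, rfl⟩ hsV
    obtain ⟨⟨s₂, xB⟩, ⟨hKB, hxB⟩, hs₂⟩ := hsV
    dsimp only at hs₂ hxA hxB ⊢
    subst hs₂
    set s := s₂
    set S : Set E := {x | x ∈ D ∧ (s : WT) * F x + ((1 - s : ℝ) : WT) * G x ≤ (r : WT)} with hSdef
    have hsIcc : s ∈ Icc (0:ℝ) 1 := hKB.1
    have hSconv : Convex ℝ S :=
      convex_sublevel hDv (convIneqOn_pair hFc hGc hsIcc.1 hsIcc.2) r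
    have hSpre : IsPreconnected S := hSconv.isPreconnected
    have hxAS : xA ∈ S := ⟨hKA.2.1, hKA.2.2⟩
    have hxBS : xB ∈ S := ⟨hKB.2.1, hKB.2.2⟩
    obtain ⟨z, hzS, hzBC, hzAC⟩ := hSpre Bᶜ Aᶜ hB.isOpen_compl hA.isOpen_compl
      (fun x hx => by
        by_contra hcc
        simp only [Set.mem_union, Set.mem_compl_iff, not_or, not_not] at hcc
        exact hABempty x hcc.2 hcc.1)
      ⟨xA, hxAS, fun h => hABempty xA hxA h⟩ ⟨xB, hxBS, fun h => hABempty xB h hxB⟩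
    rcases hsub s hsIcc.1 hsIcc.2 z hzS.1 hzS.2 with hz | hz
    · exact hzAC hz
    · exact hzBC hz
  -- connectedness of [0,1]
  have hIccsub : Icc (0:ℝ) 1 ⊆ Vᶜ ∪ Uᶜ := by
    intro s _
    by_contra hcc
    simp only [Set.mem_union, Set.mem_compl_iff, not_or, not_not] at hcc
    exact hdisj s hcc.2 hcc.1
  obtain ⟨s, hsIcc, hsVc, hsUc⟩ := isPreconnected_Icc Vᶜ Uᶜ hVc.isOpen_compl hUc.isOpen_compl
    hIccsub ⟨1, ⟨zero_le_one, le_rfl⟩, fun h => hdisj 1 hU1 h⟩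
    ⟨0, ⟨le_rfl, zero_le_one⟩, fun h => hdisj 0 h hV0⟩
  obtain ⟨x, hx, hφ⟩ := hcombo s hsIcc.1 hsIcc.2
  rcases hsub s hsIcc.1 hsIcc.2 x hx hφ with hxA | hxB
  · exact hsUc ⟨(s, x), ⟨⟨hsIcc, hx, hφ⟩, hxA⟩, rfl⟩
  · exact hsVc ⟨(s, x), ⟨⟨hsIcc, hx, hφ⟩, hxB⟩, rfl⟩

end pair

section finite
variable {E : Type*} [AddCommGroup E] [Module ℝ E] [TopologicalSpace E]
  [IsTopologicalAddGroup E] [ContinuousSMul ℝ E] [T2Space E]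

lemma finite_kyFan (r : ℝ) : ∀ (n : ℕ) (D : Set E), D.Nonempty → IsCompact D → Convex ℝ D →
    ∀ F : Fin n → E → WT, (∀ j, ConvIneqOn D (F j)) →
    (∀ j, LowerSemicontinuousOn (F j) D) →
    (∀ t : Fin n → ℝ, (∀ j, 0 ≤ t j) → (∑ j, t j) = 1 →
      ∃ x ∈ D, (∑ j, (t j : WT) * F j x) ≤ (r : WT)) →
    ∃ x ∈ D, ∀ j, F j x ≤ (r : WT) := by
  intro n
  induction n with
  | zero =>
    intro D hne _ _ F _ _ _
    obtain ⟨x, hx⟩ := hne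
    exact ⟨x, hx, fun j => absurd j.2 (by omega)⟩
  | succ n ih =>
    intro D hne hDc hDv F hFc hFl hcombo
    set G := F (Fin.last n) with hGdef
    -- D' = sublevel set of G
    set D' : Set E := {x | x ∈ D ∧ G x ≤ (r : WT)} with hD'def
    have hD'ne : D'.Nonempty := by
      obtain ⟨x, hx, hle⟩ := hcombo (fun j => if j = Fin.last n then 1 else 0)
        (fun j => by positivity) (by simp)
      refine ⟨x, hx, ?_⟩
      have : (∑ j, ((if j = Fin.last n then (1:ℝ) else 0 : ℝ) : WT) * F j x) = G x := by
        rw [Fin.sum_univ_castSucc]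
        have h0 : ∀ j : Fin n, ((if j.castSucc = Fin.last n then (1:ℝ) else 0 : ℝ) : WT)
            * F j.castSucc x = 0 := by
          intro j
          rw [if_neg (Fin.castSucc_lt_last j).ne]
          simp
        simp only [h0, Finset.sum_const_zero, zero_add, if_pos rfl]
        simp [hGdef]
      rwa [this] at hle
    have hD'c : IsCompact D' :=
      hDc.of_isClosed_subset (lsc_sublevel_closed hDc.isClosed (hFl _) r) (fun x hx => hx.1)
    have hD'v : Convex ℝ D' := convex_sublevel hDv (hFc (Fin.last n)) r
    -- the combination hypothesis for the first n functions on D'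
    have hcombo' : ∀ t : Fin n → ℝ, (∀ j, 0 ≤ t j) → (∑ j, t j) = 1 →
        ∃ x ∈ D', (∑ j, (t j : WT) * F j.castSucc x) ≤ (r : WT) := by
      intro t ht htsum
      set g : E → WT := fun x => ∑ j, (t j : WT) * F j.castSucc x with hgdef
      have hgc : ConvIneqOn D g := convIneqOn_combo (fun j => hFc j.castSucc) t ht
      have hgl : LowerSemicontinuousOn g D := lsc_combo (fun j => hFl j.castSucc) t ht
      have hpairc : ∀ s : ℝ, 0 ≤ s → s ≤ 1 →
          ∃ x ∈ D, (s : WT) * g x + ((1 - s : ℝ) : WT) * G x ≤ (r : WT) := by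
        intro s hs0 hs1
        obtain ⟨x, hx, hle⟩ := hcombo (Fin.snoc (fun j => s * t j) (1 - s))
          (fun j => by
            refine Fin.lastCases ?_ (fun j => ?_) j
            · simp only [Fin.snoc_last]; linarith
            · simp only [Fin.snoc_castSucc]; exact mul_nonneg hs0 (ht j))
          (by
            rw [Fin.sum_univ_castSucc]
            simp only [Fin.snoc_castSucc, Fin.snoc_last, ← Finset.mul_sum, htsum]
            ring)
        refine ⟨x, hx, ?_⟩
        have heq : (∑ j, ((Fin.snoc (fun j => s * t j) (1 - s) : Fin (n+1) → ℝ) j : WT) * F j x)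
            = (s : WT) * g x + ((1 - s : ℝ) : WT) * G x := by
          rw [Fin.sum_univ_castSucc]
          simp only [Fin.snoc_castSucc, Fin.snoc_last]
          congr 1
          rw [hgdef]
          simp only [wt_mul_sum]
          refine Finset.sum_congr rfl fun j _ => ?_
          rw [← wt_coe_mul_assoc]
        rwa [heq] at hle
      obtain ⟨x, hx, hgx, hGx⟩ := pair_lemma hDc hDv hgc (hFc (Fin.last n)) hgl (hFl _) hpairc
      exact ⟨x, ⟨hx, hGx⟩, hgx⟩
    obtain ⟨x, hx, hall⟩ := ih D' hD'ne hD'c hD'v (fun j => F j.castSucc)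
      (fun j => fun a ha b hb => hFc j.castSucc a ha.1 b hb.1)
      (fun j => (hFl j.castSucc).mono (fun x hx => hx.1)) hcombo'
    refine ⟨x, hx.1, fun i => ?_⟩
    refine Fin.lastCases ?_ (fun j => hall j) i
    exact hx.2
end finite

/-- **Ky Fan's Lemma.** -/
theorem kyFan_lemma {E : Type*} [AddCommGroup E] [Module ℝ E] [TopologicalSpace E]
    [IsTopologicalAddGroup E] [ContinuousSMul ℝ E] [T2Space E]
    {C : Set E} (hne : C.Nonempty) (hcomp : IsCompact C) (hconv : Convex ℝ C)
    (M : Set (E → WithTop ℝ))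
    -- (a) each `f ∈ M` is convex and lower semicontinuous on `𝒞`
    (hconvex : ∀ f ∈ M, ∀ x ∈ C, ∀ y ∈ C, ∀ t : ℝ, 0 ≤ t → t ≤ 1 →
      f (t • x + (1 - t) • y) ≤ (t : WithTop ℝ) * f x + ((1 - t : ℝ) : WithTop ℝ) * f y)
    (hlsc : ∀ f ∈ M, LowerSemicontinuousOn f C)
    -- (b) every finite convex combination of elements of `M` is dominated on `𝒞`
    -- by some element of `M`
    (hdom : ∀ (k : ℕ) (t : Fin k → ℝ) (F : Fin k → E → WithTop ℝ),
      (∀ j, 0 ≤ t j) → (∑ j, t j) = 1 → (∀ j, F j ∈ M) →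
      ∃ f ∈ M, ∀ x ∈ C, (∑ j, ((t j : WithTop ℝ) * F j x)) ≤ f x)
    -- (c) there is `r ∈ ℝ` such that each `f ∈ M` has a value not greater than `r`
    (r : ℝ) (hr : ∀ f ∈ M, ∃ x ∈ C, f x ≤ (r : WithTop ℝ)) :
    ∃ x₀ ∈ C, ∀ f ∈ M, f x₀ ≤ (r : WithTop ℝ) := by
  classical
  by_contra hcon
  push_neg at hcon
  -- the closed sublevel sets
  set T : M → Set E := fun f => {x | x ∈ C ∧ f.1 x ≤ (r : WithTop ℝ)} with hTdef
  have hTclosed : ∀ f : M, IsClosed (T f) :=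
    fun f => lsc_sublevel_closed hcomp.isClosed (hlsc f.1 f.2) r
  have hempty : C ∩ ⋂ f : M, T f = ∅ := by
    rw [Set.eq_empty_iff_forall_notMem]
    rintro x ⟨hxC, hxT⟩
    obtain ⟨f, hf, hfx⟩ := hcon x hxC
    exact hfx.not_ge (Set.mem_iInter.mp hxT ⟨f, hf⟩).2
  obtain ⟨u, hu⟩ := hcomp.elim_finite_subfamily_closed T hTclosed hempty
  -- enumerate u
  set n := u.card with hncard
  set e := u.equivFin with hedef
  set F : Fin n → E → WithTop ℝ := fun i => ((e.symm i : M) : E → WithTop ℝ) with hFdef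
  have hFM : ∀ i, F i ∈ M := fun i => (e.symm i).1.2
  have hmain := finite_kyFan r n C hne hcomp hconv F
    (fun i => hconvex (F i) (hFM i))
    (fun i => hlsc (F i) (hFM i))
    (by
      intro t ht htsum
      obtain ⟨f, hfM, hfdom⟩ := hdom n t F ht htsum hFM
      obtain ⟨x, hxC, hxr⟩ := hr f hfM
      exact ⟨x, hxC, (hfdom x hxC).trans hxr⟩)
  obtain ⟨x, hxC, hall⟩ := hmain
  have : x ∈ C ∩ ⋂ f ∈ u, T f := by
    refine ⟨hxC, ?_⟩
    simp only [Set.mem_iInter]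
    intro f hf
    have h2 : (f : E → WithTop ℝ) x ≤ (r : WithTop ℝ) := by
      simpa only [hFdef, Equiv.symm_apply_apply] using hall (e ⟨f, hf⟩)
    exact ⟨hxC, h2⟩
  rw [hu] at this
  exact this
end

section
/- Let X be a pointed metric space, Y a real Banach space, 1 ≤ p < ∞, and let (ℱ(X), δ_X) be a Lipschitz-free space over X. Let T : X → Y be a Lipschitz map with T(0) = 0 and let T̂ : ℱ(X) → Y be its linearization. If T̂ is a p-summing linear operator, then T is Lipschitz p-summing, with π_p^L(T) ≤ π_p(T̂). -/
/-!
STATEMENT 9: if the linearization `T̂ : ℱ(X) → Y` of a Lipschitz map `T : X → Y`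
(`T(0) = 0`) is `p`-summing, then `T` is Lipschitz `p`-summing with
`π_p^L(T) ≤ π_p(T̂)`.
-/

open scoped BigOperators NNReal

noncomputable section

universe u v w

/-- The (least) Lipschitz constant of a map. -/
def lipConst {α : Type*} {β : Type*} [PseudoMetricSpace α] [PseudoMetricSpace β]
    (g : α → β) : ℝ≥0 :=
  sInf {K : ℝ≥0 | LipschitzWith K g}

/-- `(F, δ)` is a Lipschitz-free space over the pointed metric space `(X, x0)`. -/
def IsFreeSpace {X : Type u} [MetricSpace X] (x0 : X) {F : Type v}
    [NormedAddCommGroup F] [NormedSpace ℝ F] [CompleteSpace F] (δ : X → F) : Prop :=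
  (∀ x x' : X, dist (δ x) (δ x') = dist x x') ∧
  δ x0 = 0 ∧
  Dense (Submodule.span ℝ (Set.range δ) : Set F) ∧
  ∀ (Z : Type w) [NormedAddCommGroup Z] [NormedSpace ℝ Z] [CompleteSpace Z],
    ∀ g : X → Z, (∃ K : ℝ≥0, LipschitzWith K g) → g x0 = 0 →
      ∃! ghat : F →L[ℝ] Z, (∀ x, ghat (δ x) = g x) ∧ ‖ghat‖ = (lipConst g : ℝ)

/-- The closed unit ball `B_{X^#}` of the space of Lipschitz functions `X → ℝ`
vanishing at the base point, normed by the Lipschitz constant. -/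
def lipBall (X : Type*) [MetricSpace X] (x0 : X) : Set (X → ℝ) :=
  {f | LipschitzWith 1 f ∧ f x0 = 0}

/-- `T` is Lipschitz `p`-summing with constant `C`:
`Σ_i λ_i d(T(x_i), T(x_i'))^p ≤ C^p · sup_{f ∈ B_{X^#}} Σ_i λ_i |f(x_i) − f(x_i')|^p`
for all finite families with `λ_i ≥ 0`. -/
def LipPSummingCond {X : Type*} [MetricSpace X] {Y : Type*} [PseudoMetricSpace Y]
    (p : ℝ) (x0 : X) (T : X → Y) (C : ℝ) : Prop :=
  ∀ (n : ℕ) (x x' : Fin n → X) (lam : Fin n → ℝ), (∀ i, 0 ≤ lam i) →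
    ∑ i, lam i * dist (T (x i)) (T (x' i)) ^ p ≤
      C ^ p * ⨆ f : lipBall X x0, ∑ i, lam i * |f.1 (x i) - f.1 (x' i)| ^ p

/-- `u` is `p`-summing with constant `C`:
`(Σ_i ‖u(x_i)‖^p)^{1/p} ≤ C · sup_{x* ∈ B_{E*}} (Σ_i |x*(x_i)|^p)^{1/p}`. -/
def PSummingCond {E F : Type*} [NormedAddCommGroup E] [NormedSpace ℝ E]
    [NormedAddCommGroup F] [NormedSpace ℝ F] (p : ℝ) (u : E →L[ℝ] F) (C : ℝ) : Prop :=
  ∀ (n : ℕ) (x : Fin n → E),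
    (∑ i, ‖u (x i)‖ ^ p) ^ (1 / p) ≤
      C * ⨆ g : {g : E →L[ℝ] ℝ // ‖g‖ ≤ 1}, (∑ i, |g.1 (x i)| ^ p) ^ (1 / p)

private theorem free_key {X : Type u} [MetricSpace X] (x0 : X)
    {Y : Type v} [NormedAddCommGroup Y] [NormedSpace ℝ Y]
    {F : Type v} [NormedAddCommGroup F] [NormedSpace ℝ F]
    (p : ℝ) (hp : 1 ≤ p)
    (δ : X → F) (hiso : ∀ x x' : X, dist (δ x) (δ x') = dist x x') (hδ0 : δ x0 = 0)
    (T : X → Y) (That : F →L[ℝ] Y) (hThat : ∀ x, That (δ x) = T x)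
    (C : ℝ) (hC0 : 0 ≤ C) (hC : PSummingCond p That C) :
    LipPSummingCond p x0 T C := by
  have hp0 : (0 : ℝ) < p := lt_of_lt_of_le one_pos hp
  intro n x x' lam hlam
  set y : Fin n → F := fun i => (lam i) ^ (1/p) • (δ (x i) - δ (x' i)) with hy
  have hpow : ∀ a : ℝ, 0 ≤ a → (a ^ (1/p)) ^ p = a := by
    intro a ha
    rw [← Real.rpow_mul ha, one_div_mul_cancel hp0.ne', Real.rpow_one]
  have habs : ∀ a r : ℝ, 0 ≤ a → |a ^ (1/p) * r| ^ p = a * |r| ^ p := by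
    intro a r ha
    rw [abs_mul, abs_of_nonneg (Real.rpow_nonneg ha _),
      Real.mul_rpow (Real.rpow_nonneg ha _) (abs_nonneg _), hpow a ha]
  have hnorm : ∀ i, ‖That (y i)‖ ^ p = lam i * dist (T (x i)) (T (x' i)) ^ p := by
    intro i
    have h1 : That (y i) = (lam i) ^ (1/p) • (T (x i) - T (x' i)) := by
      simp [hy, map_smul, map_sub, hThat]
    rw [h1, norm_smul, Real.norm_eq_abs, abs_of_nonneg (Real.rpow_nonneg (hlam i) _),
      Real.mul_rpow (Real.rpow_nonneg (hlam i) _) (norm_nonneg _), hpow _ (hlam i),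
      dist_eq_norm]
  set S := ⨆ f : lipBall X x0, ∑ i, lam i * |f.1 (x i) - f.1 (x' i)| ^ p with hSdef
  have hf0 : (fun _ : X => (0:ℝ)) ∈ lipBall X x0 :=
    ⟨(LipschitzWith.const 0).weaken zero_le_one, rfl⟩
  have hbdd : BddAbove (Set.range fun f : lipBall X x0 =>
      ∑ i, lam i * |f.1 (x i) - f.1 (x' i)| ^ p) := by
    refine ⟨∑ i, lam i * (dist (x i) (x' i)) ^ p, ?_⟩
    rintro _ ⟨f, rfl⟩
    refine Finset.sum_le_sum fun i _ => mul_le_mul_of_nonneg_left ?_ (hlam i)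
    refine Real.rpow_le_rpow (abs_nonneg _) ?_ hp0.le
    have h := f.2.1.dist_le_mul (x i) (x' i)
    simpa [Real.dist_eq] using h
  have hS0 : 0 ≤ S := by
    have h := le_ciSup hbdd (⟨_, hf0⟩ : lipBall X x0)
    simpa [Real.zero_rpow hp0.ne'] using h
  have h2 : (⨆ g : {g : F →L[ℝ] ℝ // ‖g‖ ≤ 1}, (∑ i, |g.1 (y i)| ^ p) ^ (1/p)) ≤
      S ^ (1/p) := by
    have : Nonempty {g : F →L[ℝ] ℝ // ‖g‖ ≤ 1} := ⟨⟨0, by simp⟩⟩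
    apply ciSup_le
    intro g
    refine Real.rpow_le_rpow
      (Finset.sum_nonneg fun i _ => Real.rpow_nonneg (abs_nonneg _) _) ?_ (by positivity)
    have hfmem : (fun z : X => g.1 (δ z)) ∈ lipBall X x0 := by
      constructor
      · apply LipschitzWith.of_dist_le_mul
        intro a b
        have h := g.1.lipschitz.dist_le_mul (δ a) (δ b)
        calc dist (g.1 (δ a)) (g.1 (δ b)) ≤ ‖g.1‖ * dist (δ a) (δ b) := by
              simpa using h
          _ ≤ 1 * dist a b := by
              rw [hiso]; exact mul_le_mul_of_nonneg_right g.2 dist_nonneg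
          _ = ((1 : ℝ≥0) : ℝ) * dist a b := by norm_num
      · simp [hδ0]
    have heq : ∑ i, |g.1 (y i)| ^ p
        = ∑ i, lam i * |g.1 (δ (x i)) - g.1 (δ (x' i))| ^ p := by
      refine Finset.sum_congr rfl fun i _ => ?_
      have hgy : g.1 (y i) = (lam i) ^ (1/p) * (g.1 (δ (x i)) - g.1 (δ (x' i))) := by
        simp [hy, map_smul, map_sub, smul_eq_mul]
      rw [hgy, habs _ _ (hlam i)]
    rw [heq]
    exact le_ciSup hbdd (⟨_, hfmem⟩ : lipBall X x0)
  have h3 : (∑ i, ‖That (y i)‖ ^ p) ^ (1/p) ≤ C * S ^ (1/p) :=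
    (hC n y).trans (mul_le_mul_of_nonneg_left h2 hC0)
  have hsum0 : 0 ≤ ∑ i, ‖That (y i)‖ ^ p :=
    Finset.sum_nonneg fun i _ => Real.rpow_nonneg (norm_nonneg _) _
  have h4 : ∑ i, ‖That (y i)‖ ^ p ≤ (C * S ^ (1/p)) ^ p := by
    calc ∑ i, ‖That (y i)‖ ^ p = ((∑ i, ‖That (y i)‖ ^ p) ^ (1/p)) ^ p := by
          rw [← Real.rpow_mul hsum0, one_div_mul_cancel hp0.ne', Real.rpow_one]
      _ ≤ (C * S ^ (1/p)) ^ p :=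
          Real.rpow_le_rpow (Real.rpow_nonneg hsum0 _) h3 hp0.le
  have h5 : (C * S ^ (1/p)) ^ p = C ^ p * S := by
    rw [Real.mul_rpow hC0 (Real.rpow_nonneg hS0 _), ← Real.rpow_mul hS0,
      one_div_mul_cancel hp0.ne', Real.rpow_one]
  calc ∑ i, lam i * dist (T (x i)) (T (x' i)) ^ p
      = ∑ i, ‖That (y i)‖ ^ p := Finset.sum_congr rfl fun i _ => (hnorm i).symm
    _ ≤ C ^ p * S := by rw [← h5]; exact h4

/-- If the linearization `T̂` is `p`-summing then `T` is Lipschitz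
`p`-summing, with `π_p^L(T) ≤ π_p(T̂)`. -/
theorem lipPSumming_of_linearization {X : Type u} [MetricSpace X] (x0 : X)
    {Y : Type v} [NormedAddCommGroup Y] [NormedSpace ℝ Y] [CompleteSpace Y]
    {F : Type v} [NormedAddCommGroup F] [NormedSpace ℝ F] [CompleteSpace F]
    (p : ℝ) (hp : 1 ≤ p)
    (δ : X → F) (hfree : IsFreeSpace.{u, v, v} x0 δ)
    (T : X → Y) (K : ℝ≥0) (hT : LipschitzWith K T) (hT0 : T x0 = 0)
    (That : F →L[ℝ] Y) (hThat : ∀ x, That (δ x) = T x)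
    (hps : ∃ C > 0, PSummingCond p That C) :
    (∃ C > 0, LipPSummingCond p x0 T C) ∧
    sInf {C : ℝ | 0 < C ∧ LipPSummingCond p x0 T C} ≤
      sInf {C : ℝ | 0 < C ∧ PSummingCond p That C} := by
  obtain ⟨C, hC0, hC⟩ := hps
  have main : ∀ D : ℝ, 0 ≤ D → PSummingCond p That D → LipPSummingCond p x0 T D :=
    fun D hD0 hD => free_key x0 p hp δ hfree.1 hfree.2.1 T That hThat D hD0 hD
  constructor
  · exact ⟨C, hC0, main C hC0.le hC⟩
  · refine csInf_le_csInf ⟨0, fun D hD => hD.1.le⟩ ⟨C, hC0, hC⟩ ?_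
    rintro D ⟨hD0, hD⟩
    exact ⟨hD0, main D hD0.le hD⟩


end
end

section
/- Let 1 ≤ p < ∞ and let (ℱ(ℝ), δ_ℝ) be a Lipschitz-free space over ℝ (pointed at 0). Then the map δ_ℝ : ℝ → ℱ(ℝ) is Lipschitz p-summing, but its linearization, the identity operator on ℱ(ℝ), is not p-summing. In particular, a Lipschitz map can be Lipschitz p-summing while its linearization fails to be p-summing. -/
/-!
STATEMENT 10: δ_ℝ : ℝ → ℱ(ℝ) is Lipschitz p-summing but its linearization,
the identity operator on ℱ(ℝ), is not p-summing.

-/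

open scoped BigOperators NNReal

noncomputable section

universe u v w

/-! ### Auxiliary lemmas: Rademacher signs, orthogonality, Bessel, triangle waves -/

section Aux

open Finset

/-- Rademacher sign `(-1)^(j / 2^k)`. -/
def sg (k j : ℕ) : ℝ := (-1 : ℝ) ^ (j / 2 ^ k)

lemma sg_mul_self (k j : ℕ) : sg k j * sg k j = 1 := by
  simp [sg, ← pow_add, ← two_mul, pow_mul]

lemma sg_add_pow {n k : ℕ} (hk : k < n) (j : ℕ) : sg k (j + 2 ^ n) = sg k j := by
  have h : (j + 2 ^ n) / 2 ^ k = j / 2 ^ k + 2 ^ (n - k) := by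
    have : (2:ℕ) ^ n = 2 ^ (n - k) * 2 ^ k := by
      rw [← pow_add]; congr 1; omega
    rw [this, Nat.add_mul_div_right _ _ (by positivity)]
  rw [sg, h, pow_add, sg]
  have : Even (2 ^ (n - k)) := by
    refine (Nat.even_pow).2 ⟨even_two, by omega⟩
  rw [this.neg_one_pow, mul_one]

lemma sg_orth_lt : ∀ (n k k' : ℕ), k < k' → k' < n →
    ∑ j ∈ range (2 ^ n), sg k j * sg k' j = 0 := by
  intro n
  induction n with
  | zero => intro k k' h h'; omega
  | succ n ih =>
    intro k k' h h'
    have hsplit : (2:ℕ) ^ (n + 1) = 2 ^ n + 2 ^ n := by ring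
    rw [hsplit, Finset.sum_range_add]
    rcases lt_or_eq_of_le (Nat.lt_succ_iff.mp h') with hlt | heq
    · have e1 : ∀ j, sg k (2 ^ n + j) * sg k' (2 ^ n + j) = sg k j * sg k' j := by
        intro j
        rw [add_comm, sg_add_pow (h.trans hlt), sg_add_pow hlt]
      rw [Finset.sum_congr rfl (fun j _ => e1 j), ih k k' h hlt]
      ring
    · subst heq
      have e1 : ∀ j ∈ range (2 ^ k'), sg k j * sg k' j = sg k j := by
        intro j hj
        have hj' : j / 2 ^ k' = 0 := Nat.div_eq_of_lt (Finset.mem_range.mp hj)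
        simp [sg, hj']
      have e2 : ∀ j ∈ range (2 ^ k'), sg k (2 ^ k' + j) * sg k' (2 ^ k' + j) = -sg k j := by
        intro j hj
        have hj0 : (2 ^ k' + j) / 2 ^ k' = 1 := by
          have e : 2 ^ k' + j = j + 1 * 2 ^ k' := by ring
          rw [e, Nat.add_mul_div_right _ _ (by positivity),
            Nat.div_eq_of_lt (Finset.mem_range.mp hj)]
        have f1 : sg k (2 ^ k' + j) = sg k j := by rw [add_comm]; exact sg_add_pow h j
        have f2 : sg k' (2 ^ k' + j) = -1 := by rw [sg, hj0, pow_one]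
        rw [f1, f2]; ring
      rw [Finset.sum_congr rfl e1, Finset.sum_congr rfl e2]
      simp

lemma sg_orth {n k k' : ℕ} (hk : k < n) (hk' : k' < n) :
    ∑ j ∈ range (2 ^ n), sg k j * sg k' j = if k = k' then (2 ^ n : ℝ) else 0 := by
  rcases lt_trichotomy k k' with h | h | h
  · rw [if_neg h.ne, sg_orth_lt n k k' h hk']
  · subst h
    rw [if_pos rfl, Finset.sum_congr rfl (fun j _ => sg_mul_self k j)]
    simp
  · rw [if_neg h.ne']
    rw [Finset.sum_congr rfl (fun j _ => mul_comm (sg k j) (sg k' j)),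
      sg_orth_lt n k' k h hk]

lemma bessel (n : ℕ) (a : ℕ → ℝ) :
    ∑ k ∈ range n, (∑ j ∈ range (2 ^ n), sg k j * a j) ^ 2 ≤
      (2 ^ n : ℝ) * ∑ j ∈ range (2 ^ n), (a j) ^ 2 := by
  set N : ℝ := ((2 : ℝ) ^ n) with hNdef
  have hN0 : (0:ℝ) < N := by positivity
  set c : ℕ → ℝ := fun k => ∑ j ∈ range (2 ^ n), sg k j * a j with hc
  set B : ℕ → ℝ := fun j => ∑ k ∈ range n, (c k / N) * sg k j with hB
  have key : 0 ≤ ∑ j ∈ range (2 ^ n), (a j - B j) ^ 2 :=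
    Finset.sum_nonneg fun j _ => sq_nonneg _
  have step1 : ∑ j ∈ range (2 ^ n), (a j - B j) ^ 2
      = ∑ j ∈ range (2 ^ n), (a j)^2 - 2 * ∑ j ∈ range (2 ^ n), (B j * a j)
        + ∑ j ∈ range (2 ^ n), (B j)^2 := by
    rw [Finset.mul_sum, ← Finset.sum_sub_distrib, ← Finset.sum_add_distrib]
    exact Finset.sum_congr rfl fun j _ => by ring
  have step2 : ∑ j ∈ range (2 ^ n), (B j * a j) = (1/N) * ∑ k ∈ range n, (c k)^2 := by
    have : ∀ j, B j * a j = ∑ k ∈ range n, (c k / N) * (sg k j * a j) := by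
      intro j
      rw [hB, Finset.sum_mul]
      exact Finset.sum_congr rfl fun k _ => by ring
    rw [Finset.sum_congr rfl fun j _ => this j, Finset.sum_comm, Finset.mul_sum]
    refine Finset.sum_congr rfl fun k _ => ?_
    rw [← Finset.mul_sum]
    show c k / N * c k = 1 / N * c k ^ 2
    ring
  have step3 : ∑ j ∈ range (2 ^ n), (B j)^2 = (1/N) * ∑ k ∈ range n, (c k)^2 := by
    have e1 : ∀ j, (B j)^2
        = ∑ k ∈ range n, ∑ k' ∈ range n, ((c k / N) * (c k' / N)) * (sg k j * sg k' j) := by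
      intro j
      rw [sq, hB, Finset.sum_mul_sum]
      exact Finset.sum_congr rfl fun k _ => Finset.sum_congr rfl fun k' _ => by ring
    rw [Finset.sum_congr rfl fun j _ => e1 j, Finset.sum_comm]
    have e2 : ∀ k ∈ range n,
        ∑ j ∈ range (2 ^ n), ∑ k' ∈ range n, ((c k / N) * (c k' / N)) * (sg k j * sg k' j)
        = (c k / N)^2 * N := by
      intro k hk
      rw [Finset.sum_comm]
      have e3 : ∀ k' ∈ range n,
          ∑ j ∈ range (2 ^ n), ((c k / N) * (c k' / N)) * (sg k j * sg k' j)
          = ((c k / N) * (c k' / N)) * (if k = k' then N else 0) := by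
        intro k' hk'
        rw [← Finset.mul_sum, sg_orth (Finset.mem_range.mp hk) (Finset.mem_range.mp hk')]
      rw [Finset.sum_congr rfl e3]
      rw [Finset.sum_eq_single k]
      · simp [sq]
      · intro k' _ hne; simp [Ne.symm hne]
      · intro h; exact absurd hk h
    rw [Finset.sum_congr rfl e2, Finset.mul_sum]
    refine Finset.sum_congr rfl fun k _ => ?_
    field_simp
  rw [step1, step2, step3] at key
  have : (1/N) * ∑ k ∈ range n, (c k)^2 ≤ ∑ j ∈ range (2 ^ n), (a j)^2 := by linarith
  calc ∑ k ∈ range n, (c k)^2 = N * ((1/N) * ∑ k ∈ range n, (c k)^2) := by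
        field_simp
    _ ≤ N * ∑ j ∈ range (2 ^ n), (a j)^2 := mul_le_mul_of_nonneg_left this hN0.le

open Metric in
lemma infDist_left {L : ℝ} (hL : 0 < L) (m : ℤ) (t : ℝ)
    (h1 : (m : ℝ) * L ≤ t) (h2 : t ≤ m * L + L / 2) :
    infDist t (Set.range (fun m : ℤ => (m : ℝ) * L)) = t - m * L := by
  have hne : (Set.range (fun m : ℤ => (m : ℝ) * L)).Nonempty := ⟨_, ⟨m, rfl⟩⟩
  refine le_antisymm ?_ ?_
  · have := infDist_le_dist_of_mem (x := t)
      (Set.mem_range_self (f := fun m : ℤ => (m : ℝ) * L) m)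
    rwa [Real.dist_eq, abs_of_nonneg (by linarith)] at this
  · by_contra hlt
    push_neg at hlt
    obtain ⟨y, ⟨m', rfl⟩, hy⟩ := (infDist_lt_iff hne).mp hlt
    rw [Real.dist_eq] at hy
    rcases le_or_gt m' m with hm | hm
    · have : (m' : ℝ) * L ≤ m * L := by
        have : (m' : ℝ) ≤ m := by exact_mod_cast hm
        nlinarith
      have : t - m * L ≤ |t - m' * L| := le_trans (by linarith) (le_abs_self _)
      linarith
    · have hm1 : (m + 1 : ℝ) ≤ (m' : ℝ) := by exact_mod_cast hm
      have : (m : ℝ) * L + L ≤ m' * L := by nlinarith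
      have : t - m * L ≤ |t - m' * L| := by
        rw [abs_sub_comm]
        exact le_trans (by linarith) (le_abs_self _)
      linarith

open Metric in
lemma infDist_right {L : ℝ} (hL : 0 < L) (m : ℤ) (t : ℝ)
    (h1 : (m : ℝ) * L + L / 2 ≤ t) (h2 : t ≤ (m + 1 : ℤ) * L) :
    infDist t (Set.range (fun m : ℤ => (m : ℝ) * L)) = (m + 1 : ℤ) * L - t := by
  have hne : (Set.range (fun m : ℤ => (m : ℝ) * L)).Nonempty := ⟨_, ⟨m, rfl⟩⟩
  have hc : ((m + 1 : ℤ) : ℝ) = (m : ℝ) + 1 := by push_cast; ring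
  refine le_antisymm ?_ ?_
  · have := infDist_le_dist_of_mem (x := t)
      (Set.mem_range_self (f := fun m : ℤ => (m : ℝ) * L) (m + 1))
    rwa [Real.dist_eq, abs_sub_comm, abs_of_nonneg (by linarith)] at this
  · by_contra hlt
    push_neg at hlt
    obtain ⟨y, ⟨m', rfl⟩, hy⟩ := (infDist_lt_iff hne).mp hlt
    rw [Real.dist_eq] at hy
    rcases le_or_gt m' m with hm | hm
    · have hmr : (m' : ℝ) ≤ m := by exact_mod_cast hm
      have h3 : (m' : ℝ) * L ≤ m * L := by nlinarith
      have : ((m+1:ℤ):ℝ) * L - t ≤ |t - m' * L| :=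
        le_trans (by rw [hc]; linarith) (le_abs_self _)
      linarith
    · have hm1 : (m + 1 : ℝ) ≤ (m' : ℝ) := by exact_mod_cast hm
      have h3 : ((m:ℝ) + 1) * L ≤ m' * L := by nlinarith
      have : ((m+1:ℤ):ℝ) * L - t ≤ |t - m' * L| := by
        rw [abs_sub_comm]
        exact le_trans (by rw [hc]; linarith) (le_abs_self _)
      linarith

open Metric in
lemma infDist_grid (k j : ℕ) :
    infDist ((j : ℝ) + 1) (Set.range (fun m : ℤ => (m : ℝ) * 2 ^ (k + 1)))
      - infDist (j : ℝ) (Set.range (fun m : ℤ => (m : ℝ) * 2 ^ (k + 1))) = sg k j := by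
  have hL : (0:ℝ) < 2 ^ (k + 1) := by positivity
  have hhalf : (2:ℝ) ^ (k + 1) / 2 = 2 ^ k := by
    rw [pow_succ]; ring
  set q := j / 2 ^ k with hq
  set r := j % 2 ^ k with hr
  have hjr : j = q * 2 ^ k + r := (Nat.div_add_mod' j (2 ^ k)).symm
  have hrlt : r < 2 ^ k := Nat.mod_lt _ (by positivity)
  rcases Nat.even_or_odd q with ⟨m, hm⟩ | ⟨m, hm⟩
  · have h1 : ((m:ℤ) : ℝ) * 2 ^ (k+1) ≤ (j : ℝ) := by
      push_cast
      rw [hjr]; push_cast [hm]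
      rw [pow_succ]; nlinarith [Nat.cast_nonneg (α := ℝ) r]
    have h2 : (j : ℝ) + 1 ≤ ((m:ℤ) : ℝ) * 2 ^ (k+1) + 2 ^ (k+1) / 2 := by
      rw [hhalf]
      have : (r : ℝ) + 1 ≤ 2 ^ k := by exact_mod_cast Nat.succ_le_of_lt hrlt
      push_cast
      rw [hjr]; push_cast [hm]
      rw [pow_succ]; nlinarith
    rw [infDist_left hL m _ (by linarith) h2,
        infDist_left hL m _ h1 (by linarith)]
    have : sg k j = 1 := by
      rw [sg, ← hq, hm, ← two_mul]
      exact (even_two_mul m).neg_one_pow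
    rw [this]; ring
  · have hmL : ((m:ℤ) : ℝ) * 2 ^ (k+1) + 2 ^ (k+1) / 2 = (q : ℝ) * 2 ^ k := by
      rw [hhalf]; push_cast [hm]; rw [pow_succ]; ring
    have hm1L : (((m:ℤ) + 1) : ℝ) * 2 ^ (k+1) = (q : ℝ) * 2 ^ k + 2 ^ k := by
      push_cast [hm]; rw [pow_succ]; ring
    have h1 : ((m:ℤ) : ℝ) * 2 ^ (k+1) + 2 ^ (k+1) / 2 ≤ (j : ℝ) := by
      rw [hmL, hjr]; push_cast
      nlinarith [Nat.cast_nonneg (α := ℝ) r]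
    have h2 : (j : ℝ) + 1 ≤ ((((m:ℤ) + 1) : ℤ) : ℝ) * 2 ^ (k+1) := by
      push_cast at hm1L ⊢
      rw [hm1L, hjr]
      have : (r : ℝ) + 1 ≤ 2 ^ k := by exact_mod_cast Nat.succ_le_of_lt hrlt
      push_cast
      nlinarith
    rw [infDist_right hL m _ (by linarith) h2,
        infDist_right hL m _ h1 (by push_cast at h2 ⊢; linarith)]
    have : sg k j = -1 := by
      rw [sg, ← hq, hm]
      exact (odd_two_mul_add_one m).neg_one_pow
    rw [this]; ring

end Aux

/-- The canonical embedding `δ_ℝ : ℝ → ℱ(ℝ)` into a Lipschitz-free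
space over `ℝ` (pointed at `0`) is Lipschitz `p`-summing, but its linearization, the
identity operator on `ℱ(ℝ)`, is not `p`-summing. -/
theorem delta_lipPSumming_id_not_pSumming (p : ℝ) (hp : 1 ≤ p)
    {F : Type} [NormedAddCommGroup F] [NormedSpace ℝ F] [CompleteSpace F]
    (δ : ℝ → F) (hfree : IsFreeSpace.{0, 0, 0} (0 : ℝ) δ) :
    (∃ C > 0, LipPSummingCond p (0 : ℝ) δ C) ∧
    ¬ (∃ C > 0, PSummingCond p (ContinuousLinearMap.id ℝ F) C) := by
  constructor
  · -- δ is Lipschitz p-summing with constant 1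
    refine ⟨1, one_pos, ?_⟩
    intro n x x' lam hlam
    have hp0 : (0:ℝ) ≤ p := le_trans zero_le_one hp
    have hid : (fun t : ℝ => t) ∈ lipBall ℝ 0 := ⟨LipschitzWith.id, rfl⟩
    have hbdd : BddAbove (Set.range fun f : lipBall ℝ 0 =>
        ∑ i, lam i * |f.1 (x i) - f.1 (x' i)| ^ p) := by
      refine ⟨∑ i, lam i * dist (x i) (x' i) ^ p, ?_⟩
      rintro - ⟨f, rfl⟩
      refine Finset.sum_le_sum fun i _ => mul_le_mul_of_nonneg_left ?_ (hlam i)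
      refine Real.rpow_le_rpow (abs_nonneg _) ?_ hp0
      have h := f.2.1.dist_le_mul (x i) (x' i)
      rwa [NNReal.coe_one, one_mul, Real.dist_eq] at h
    have hle : (∑ i, lam i * |x i - x' i| ^ p) ≤
        ⨆ f : lipBall ℝ 0, ∑ i, lam i * |f.1 (x i) - f.1 (x' i)| ^ p :=
      le_ciSup hbdd (⟨fun t => t, hid⟩ : lipBall ℝ 0)
    rw [Real.one_rpow, one_mul]
    calc ∑ i, lam i * dist (δ (x i)) (δ (x' i)) ^ p
        = ∑ i, lam i * |x i - x' i| ^ p := by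
          refine Finset.sum_congr rfl fun i _ => ?_
          rw [hfree.1, Real.dist_eq]
      _ ≤ _ := hle
  · -- the identity on F is not p-summing
    rintro ⟨C, hC, hps⟩
    obtain ⟨hiso, hδ0, -, huniv⟩ := hfree
    have hp0 : (0:ℝ) < p := lt_of_lt_of_le one_pos hp
    obtain ⟨n, hn⟩ := exists_nat_gt (C ^ (2 * p))
    have hCn : (0:ℝ) < C ^ (2*p) := Real.rpow_pos_of_pos hC _
    have hnpos : (0:ℝ) < n := lt_trans hCn hn
    have hNR : (0:ℝ) < ((2:ℝ)^n) := by positivity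
    -- the dyadic grid
    set t : ℕ → ℝ := fun j => (j : ℝ) / (2:ℝ)^n with ht
    set x : Fin n → F :=
      fun k => ∑ j ∈ Finset.range (2^n), sg (k:ℕ) j • (δ (t (j+1)) - δ (t j)) with hx
    have htdiff : ∀ j : ℕ, t (j+1) - t j = 1 / (2:ℝ)^n := by
      intro j
      rw [ht]
      push_cast
      field_simp
      ring
    have hdist : ∀ j : ℕ, ‖δ (t (j+1)) - δ (t j)‖ = 1 / (2:ℝ)^n := by
      intro j
      rw [← dist_eq_norm, hiso, Real.dist_eq, htdiff j, abs_of_pos (by positivity)]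
    -- lower bound on norms via the triangle-wave functionals
    have hnorm : ∀ k : Fin n, (1:ℝ) ≤ ‖x k‖ := by
      intro k
      have hflip : LipschitzWith 1 (fun s : ℝ => ((2:ℝ)^n)⁻¹ *
          Metric.infDist ((2:ℝ)^n * s)
            (Set.range (fun m : ℤ => (m : ℝ) * 2 ^ ((k:ℕ) + 1)))) := by
        refine LipschitzWith.of_dist_le_mul fun a b => ?_
        rw [NNReal.coe_one, one_mul]
        set S := Set.range (fun m : ℤ => (m : ℝ) * 2 ^ ((k:ℕ) + 1))
        have h1 := (Metric.lipschitz_infDist_pt S).dist_le_mul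
          ((2:ℝ)^n*a) ((2:ℝ)^n*b)
        rw [NNReal.coe_one, one_mul] at h1
        rw [Real.dist_eq, Real.dist_eq] at h1 ⊢
        have h2 : |(2:ℝ)^n*a - (2:ℝ)^n*b| = (2:ℝ)^n * |a - b| := by
          rw [← mul_sub, abs_mul, abs_of_pos hNR]
        rw [h2] at h1
        calc |((2:ℝ)^n)⁻¹ * Metric.infDist ((2:ℝ)^n*a) S
              - ((2:ℝ)^n)⁻¹ * Metric.infDist ((2:ℝ)^n*b) S|
            = ((2:ℝ)^n)⁻¹ * |Metric.infDist ((2:ℝ)^n*a) S - Metric.infDist ((2:ℝ)^n*b) S| := by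
              rw [← mul_sub, abs_mul, abs_inv, abs_of_pos hNR]
          _ ≤ ((2:ℝ)^n)⁻¹ * ((2:ℝ)^n * |a - b|) :=
              mul_le_mul_of_nonneg_left h1 (by positivity)
          _ = |a - b| := by field_simp
      have hf0 : (fun s : ℝ => ((2:ℝ)^n)⁻¹ *
          Metric.infDist ((2:ℝ)^n * s)
            (Set.range (fun m : ℤ => (m : ℝ) * 2 ^ ((k:ℕ) + 1)))) 0 = 0 := by
        simp only [mul_zero]
        rw [Metric.infDist_zero_of_mem
          (show (0:ℝ) ∈ Set.range (fun m : ℤ => (m : ℝ) * 2 ^ ((k:ℕ) + 1)) from ⟨0, by simp⟩),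
          mul_zero]
      obtain ⟨g, ⟨hg1, hg2⟩, -⟩ := huniv ℝ _ ⟨1, hflip⟩ hf0
      have hlip1 : (lipConst (fun s : ℝ => ((2:ℝ)^n)⁻¹ *
          Metric.infDist ((2:ℝ)^n * s)
            (Set.range (fun m : ℤ => (m : ℝ) * 2 ^ ((k:ℕ) + 1)))) : ℝ) ≤ 1 := by
        have h := csInf_le (OrderBot.bddBelow _)
          (show (1:ℝ≥0) ∈ {K : ℝ≥0 | LipschitzWith K (fun s : ℝ => ((2:ℝ)^n)⁻¹ *
            Metric.infDist ((2:ℝ)^n * s)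
              (Set.range (fun m : ℤ => (m : ℝ) * 2 ^ ((k:ℕ) + 1))))} from hflip)
        exact_mod_cast h
      have hgnorm : ‖g‖ ≤ 1 := le_trans (le_of_eq hg2) hlip1
      have hstep : ∀ j : ℕ, ((2:ℝ)^n)⁻¹ *
          Metric.infDist ((2:ℝ)^n * (t (j+1)))
            (Set.range (fun m : ℤ => (m : ℝ) * 2 ^ ((k:ℕ) + 1)))
          - ((2:ℝ)^n)⁻¹ *
          Metric.infDist ((2:ℝ)^n * (t j))
            (Set.range (fun m : ℤ => (m : ℝ) * 2 ^ ((k:ℕ) + 1)))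
          = sg (k:ℕ) j / (2:ℝ)^n := by
        intro j
        have h1 : (2:ℝ)^n * t (j+1) = (j:ℝ) + 1 := by
          rw [ht]; push_cast; field_simp
        have h2 : (2:ℝ)^n * t j = (j:ℝ) := by rw [ht]; field_simp
        rw [h1, h2, ← mul_sub, infDist_grid (k:ℕ) j]
        field_simp
      have hgx : g (x k) = 1 := by
        rw [hx]
        simp only
        rw [map_sum]
        have e : ∀ j ∈ Finset.range (2^n),
            g (sg (k:ℕ) j • (δ (t (j+1)) - δ (t j))) = (1:ℝ) / (2:ℝ)^n := by
          intro j _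
          rw [map_smul, map_sub, hg1, hg1, smul_eq_mul, hstep j]
          rw [show sg (k:ℕ) j * (sg (k:ℕ) j / (2:ℝ)^n)
            = (sg (k:ℕ) j * sg (k:ℕ) j) / (2:ℝ)^n from by ring, sg_mul_self]
        rw [Finset.sum_congr rfl e, Finset.sum_const, Finset.card_range, nsmul_eq_mul]
        push_cast
        field_simp
      have hb := g.le_opNorm (x k)
      rw [hgx, norm_one] at hb
      nlinarith [norm_nonneg (x k),
        mul_le_mul_of_nonneg_right hgnorm (norm_nonneg (x k))]
    -- upper bound on the weak sums via Bessel's inequality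
    have hne : Nonempty {g : F →L[ℝ] ℝ // ‖g‖ ≤ 1} := ⟨⟨0, by simp⟩⟩
    have hweak : ∀ g : {g : F →L[ℝ] ℝ // ‖g‖ ≤ 1},
        (∑ k : Fin n, |g.1 (x k)| ^ p) ^ (1/p) ≤ (Real.sqrt n) ^ ((1:ℝ)/p) := by
      rintro ⟨g, hg⟩
      simp only
      set a : ℕ → ℝ := fun j => g (δ (t (j+1))) - g (δ (t j)) with ha
      have habs : ∀ j : ℕ, |a j| ≤ 1 / (2:ℝ)^n := by
        intro j
        rw [ha]
        simp only
        rw [← map_sub, ← Real.norm_eq_abs]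
        calc ‖g (δ (t (j+1)) - δ (t j))‖ ≤ ‖g‖ * ‖δ (t (j+1)) - δ (t j)‖ := g.le_opNorm _
          _ ≤ 1 * (1/(2:ℝ)^n) := by
              rw [hdist j]
              exact mul_le_mul_of_nonneg_right hg (by positivity)
          _ = 1/(2:ℝ)^n := one_mul _
      have hcform : ∀ k : Fin n, g (x k) = ∑ j ∈ Finset.range (2^n), sg (k:ℕ) j * a j := by
        intro k
        rw [hx]
        simp only
        rw [map_sum]
        refine Finset.sum_congr rfl fun j _ => ?_
        rw [map_smul, map_sub, smul_eq_mul, ha]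
      have hsum2 : ∑ k : Fin n, (g (x k))^2 ≤ 1 := by
        have e1 : ∑ k : Fin n, (g (x k))^2
            = ∑ k ∈ Finset.range n, (∑ j ∈ Finset.range (2^n), sg k j * a j)^2 := by
          rw [Finset.sum_congr rfl fun k _ => by rw [hcform k]]
          exact Fin.sum_univ_eq_sum_range
            (fun k => (∑ j ∈ Finset.range (2^n), sg k j * a j)^2) n
        rw [e1]
        calc ∑ k ∈ Finset.range n, (∑ j ∈ Finset.range (2^n), sg k j * a j)^2
            ≤ ((2:ℝ)^n) * ∑ j ∈ Finset.range (2^n), (a j)^2 := bessel n a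
          _ ≤ ((2:ℝ)^n) * ∑ _j ∈ Finset.range (2^n), (1/(2:ℝ)^n)^2 := by
              refine mul_le_mul_of_nonneg_left (Finset.sum_le_sum fun j _ => ?_) (by positivity)
              calc (a j)^2 = |a j|^2 := (sq_abs _).symm
                _ ≤ (1/(2:ℝ)^n)^2 := pow_le_pow_left₀ (abs_nonneg _) (habs j) 2
          _ = 1 := by
              rw [Finset.sum_const, Finset.card_range, nsmul_eq_mul]
              push_cast
              field_simp
      have habs1 : ∀ k : Fin n, |g (x k)| ≤ 1 := by
        intro k
        have h1 : (g (x k))^2 ≤ 1 :=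
          le_trans (Finset.single_le_sum (f := fun k : Fin n => (g (x k))^2)
            (fun k _ => sq_nonneg _) (Finset.mem_univ k)) hsum2
        nlinarith [abs_nonneg (g (x k)), sq_abs (g (x k))]
      have h1 : ∑ k : Fin n, |g (x k)| ^ p ≤ Real.sqrt n := by
        have h2 : ∑ k : Fin n, |g (x k)| ^ p ≤ ∑ k : Fin n, |g (x k)| := by
          refine Finset.sum_le_sum fun k _ => ?_
          have h := Real.rpow_le_rpow_of_exponent_ge' (abs_nonneg _) (habs1 k)
            zero_le_one hp
          rwa [Real.rpow_one] at h
        have h3 : (∑ k : Fin n, |g (x k)|)^2 ≤ (n:ℝ) := by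
          have h4 := sq_sum_le_card_mul_sum_sq (s := (Finset.univ : Finset (Fin n)))
            (f := fun k : Fin n => |g (x k)|)
          rw [Finset.card_univ, Fintype.card_fin] at h4
          have h5 : ∑ k : Fin n, |g (x k)|^2 ≤ 1 := by
            rw [Finset.sum_congr rfl fun k _ => sq_abs (g (x k))]
            exact hsum2
          calc (∑ k : Fin n, |g (x k)|)^2 ≤ (n:ℝ) * ∑ k : Fin n, |g (x k)|^2 := h4
            _ ≤ (n:ℝ) * 1 := mul_le_mul_of_nonneg_left h5 (Nat.cast_nonneg n)
            _ = (n:ℝ) := mul_one _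
        have h6 : ∑ k : Fin n, |g (x k)| ≤ Real.sqrt n :=
          (Real.le_sqrt (Finset.sum_nonneg fun k _ => abs_nonneg _)
            (Nat.cast_nonneg n)).2 h3
        linarith
      exact Real.rpow_le_rpow
        (Finset.sum_nonneg fun k _ => Real.rpow_nonneg (abs_nonneg _) _) h1 (by positivity)
    -- combine everything
    have hineq := hps n x
    simp only [ContinuousLinearMap.id_apply] at hineq
    have hsup : (⨆ g : {g : F →L[ℝ] ℝ // ‖g‖ ≤ 1},
        (∑ k : Fin n, |g.1 (x k)| ^ p) ^ (1/p)) ≤ (Real.sqrt n) ^ ((1:ℝ)/p) :=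
      ciSup_le hweak
    have hL : ((n:ℝ)) ^ ((1:ℝ)/p) ≤ (∑ k : Fin n, ‖x k‖ ^ p) ^ ((1:ℝ)/p) := by
      refine Real.rpow_le_rpow (Nat.cast_nonneg n) ?_ (by positivity)
      calc (n:ℝ) = ∑ _k : Fin n, (1:ℝ) := by simp
        _ ≤ ∑ k : Fin n, ‖x k‖ ^ p :=
            Finset.sum_le_sum fun k _ => Real.one_le_rpow (hnorm k) (le_of_lt hp0)
    have hmain : ((n:ℝ)) ^ ((1:ℝ)/p) ≤ C * (Real.sqrt n) ^ ((1:ℝ)/p) :=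
      le_trans hL (le_trans hineq (mul_le_mul_of_nonneg_left hsup (le_of_lt hC)))
    have hu : (0:ℝ) < 1/(2*p) := by positivity
    have hnu : (Real.sqrt n) ^ ((1:ℝ)/p) = (n:ℝ) ^ ((1:ℝ)/(2*p)) := by
      rw [Real.sqrt_eq_rpow, ← Real.rpow_mul (Nat.cast_nonneg n)]
      congr 1
      field_simp
    have hsplit : ((n:ℝ)) ^ ((1:ℝ)/p) = (n:ℝ)^((1:ℝ)/(2*p)) * (n:ℝ)^((1:ℝ)/(2*p)) := by
      rw [← Real.rpow_add hnpos]
      congr 1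
      field_simp
      ring
    have hnu_pos : (0:ℝ) < (n:ℝ)^((1:ℝ)/(2*p)) := Real.rpow_pos_of_pos hnpos _
    have hle : (n:ℝ)^((1:ℝ)/(2*p)) ≤ C := by
      rw [hsplit, hnu] at hmain
      nlinarith
    have hlt : C < (n:ℝ)^((1:ℝ)/(2*p)) := by
      have h := Real.rpow_lt_rpow (le_of_lt hCn) hn hu
      have h2 : (C ^ (2*p)) ^ ((1:ℝ)/(2*p)) = C := by
        rw [← Real.rpow_mul (le_of_lt hC)]
        rw [show (2*p) * ((1:ℝ)/(2*p)) = 1 by field_simp]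
        exact Real.rpow_one C
      rwa [h2] at h
    linarith

end
end
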